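/- arXiv:1805.07576 — 8 statements merged into one kernel-verified Lean document; each statement's English description precedes it below -/
import Mathlib

section
/- If (A,B) is a Lehman pair of n×n (0,1)-matrices satisfying AB^T = J + kI with k ∈ {-1,1,2,...} and n > 1, then B^T A = A B^T, and there exist integers r and s such that every row and column of A sums to r, every row and column of B sums to s, and rs = n + k. -/
open Matrix BigOperators

/-- A (0,1)-matrix: every entry is 0 or 1. -/
def is01 {m n : Type*} (A : Matrix m n ℤ) : Prop := ∀ i j, A i j = 0 ∨ A i j = 1

/-- Bridges–Ryser: a Lehman pair consists of regular matrices with rs = n + k,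
and the products commute. -/
theorem stmt0 {n : ℕ} (hn : 1 < n) (A B : Matrix (Fin n) (Fin n) ℤ)
    (hA : is01 A) (hB : is01 B) (k : ℤ) (hk : k = -1 ∨ 1 ≤ k)
    (hAB : A * Bᵀ = Matrix.of (fun _ _ => (1 : ℤ)) + k • 1) :
    Bᵀ * A = A * Bᵀ ∧
    ∃ r s : ℤ, (∀ i, ∑ j, A i j = r) ∧ (∀ j, ∑ i, A i j = r) ∧
      (∀ i, ∑ j, B i j = s) ∧ (∀ j, ∑ i, B i j = s) ∧ r * s = n + k := by
  have hn2 : (2:ℤ) ≤ (n:ℤ) := by exact_mod_cast hn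
  have hk0 : k ≠ 0 := by rcases hk with h | h <;> omega
  have hnk : 0 < (n:ℤ) + k := by rcases hk with h | h <;> omega
  set c : Fin n → ℤ := fun i => ∑ l, B l i with hc_def
  set d : Fin n → ℤ := fun j => ∑ l, A l j with hd_def
  -- entries of A*Bᵀ
  have hABe : ∀ i j, (A * Bᵀ) i j = (1 : ℤ) + (if i = j then k else 0) := by
    intro i j
    rw [hAB]
    simp only [Matrix.add_apply, Matrix.of_apply, Matrix.smul_apply, Matrix.one_apply,
      smul_eq_mul, mul_ite, mul_one, mul_zero]
  -- row sums against c
  have hAc : ∀ i, ∑ j, A i j * c j = (n:ℤ) + k := by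
    intro i
    calc ∑ j, A i j * c j = ∑ j, ∑ l, A i j * B l j := by
          simp [hc_def, Finset.mul_sum]
      _ = ∑ l, ∑ j, A i j * B l j := Finset.sum_comm
      _ = ∑ l, (A * Bᵀ) i l := by simp [Matrix.mul_apply, Matrix.transpose_apply]
      _ = ∑ l : Fin n, ((1:ℤ) + if i = l then k else 0) := by simp [hABe]
      _ = (n:ℤ) + k := by simp [Finset.sum_add_distrib]
  have hBd : ∀ i, ∑ j, B i j * d j = (n:ℤ) + k := by
    intro i
    calc ∑ j, B i j * d j = ∑ j, ∑ l, B i j * A l j := by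
          simp [hd_def, Finset.mul_sum]
      _ = ∑ l, ∑ j, B i j * A l j := Finset.sum_comm
      _ = ∑ l, (A * Bᵀ) l i := by
          refine Finset.sum_congr rfl fun l _ => ?_
          simp [Matrix.mul_apply, Matrix.transpose_apply, mul_comm]
      _ = ∑ l : Fin n, ((1:ℤ) + if l = i then k else 0) := by simp [hABe]
      _ = (n:ℤ) + k := by simp [Finset.sum_add_distrib]
  -- total sum
  have hsum : ∑ l, c l * d l = (n:ℤ) * ((n:ℤ) + k) := by
    calc ∑ l, c l * d l = ∑ l, ∑ i, ∑ j, A i l * B j l := by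
          refine Finset.sum_congr rfl fun l _ => ?_
          rw [hc_def, hd_def, mul_comm, Finset.sum_mul_sum]
      _ = ∑ i, ∑ l, ∑ j, A i l * B j l := Finset.sum_comm
      _ = ∑ i, ∑ j, ∑ l, A i l * B j l :=
          Finset.sum_congr rfl fun i _ => Finset.sum_comm
      _ = ∑ i, ∑ j, (A * Bᵀ) i j := by simp [Matrix.mul_apply, Matrix.transpose_apply]
      _ = ∑ i : Fin n, ∑ j : Fin n, ((1:ℤ) + if i = j then k else 0) := by simp [hABe]
      _ = (n:ℤ) * ((n:ℤ) + k) := by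
          simp [Finset.sum_add_distrib, Finset.mul_sum]
  -- the matrix X with A * X = 0
  set X : Matrix (Fin n) (Fin n) ℤ :=
    Matrix.of (fun i j => ((n:ℤ) + k) * ((Bᵀ * A) i j - (if i = j then k else 0)) - c i * d j)
    with hX_def
  have hAX : A * X = 0 := by
    ext i j
    have h1 : ∑ l, A i l * ((Bᵀ * A) l j) = d j + k * A i j := by
      calc ∑ l, A i l * ((Bᵀ * A) l j) = (A * (Bᵀ * A)) i j := by
            rw [Matrix.mul_apply]
        _ = ((A * Bᵀ) * A) i j := by rw [Matrix.mul_assoc]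
        _ = ∑ l, ((1:ℤ) + if i = l then k else 0) * A l j := by
            rw [Matrix.mul_apply]
            exact Finset.sum_congr rfl fun l _ => by rw [hABe]
        _ = d j + k * A i j := by
            simp [add_mul, Finset.sum_add_distrib, hd_def, ite_mul]
    have h2 : ∑ l, A i l * c l = (n:ℤ) + k := hAc i
    rw [Matrix.mul_apply, Matrix.zero_apply]
    have expand : ∀ l, A i l * (X l j)
        = ((n:ℤ)+k) * (A i l * ((Bᵀ * A) l j)) - ((n:ℤ)+k) * (A i l * (if l = j then k else 0))
          - (A i l * c l) * d j := by
      intro l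
      rw [hX_def]
      simp only [Matrix.of_apply]
      ring
    rw [Finset.sum_congr (rfl : (Finset.univ : Finset (Fin n)) = Finset.univ) (fun l _ => expand l)]
    rw [Finset.sum_sub_distrib, Finset.sum_sub_distrib, ← Finset.mul_sum, ← Finset.mul_sum,
      ← Finset.sum_mul, h1, h2]
    have h3 : ∑ l, A i l * (if l = j then k else 0) = A i j * k := by
      simp [mul_ite]
    rw [h3]; ring
  -- invertibility of A over ℚ and cancellation
  have hX0 : X = 0 := by
    set φ : Matrix (Fin n) (Fin n) ℤ →+* Matrix (Fin n) (Fin n) ℚ := (Int.castRingHom ℚ).mapMatrix with hφ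
    set Jq : Matrix (Fin n) (Fin n) ℚ := Matrix.of (fun _ _ => (1:ℚ)) with hJq
    have hJq2 : Jq * Jq = (n:ℚ) • Jq := by
      ext i j; simp [hJq, Matrix.mul_apply]
    have hknz : ((k:ℚ)) ≠ 0 := Int.cast_ne_zero.mpr hk0
    have hnknz : ((n:ℚ) + (k:ℚ)) ≠ 0 := by
      have h := ne_of_gt hnk
      exact_mod_cast fun hh => h (by exact_mod_cast hh)
    set E : Matrix (Fin n) (Fin n) ℚ := (k:ℚ)⁻¹ • ((1 : Matrix (Fin n) (Fin n) ℚ)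
      - ((n:ℚ) + (k:ℚ))⁻¹ • Jq) with hE_def
    have hprod : (Jq + (k:ℚ) • 1) * E = 1 := by
      rw [hE_def, Matrix.mul_smul, mul_sub, Matrix.mul_smul, mul_one, add_mul, hJq2,
        Matrix.smul_mul, one_mul]
      rw [smul_add, smul_smul, smul_smul]
      have h5 : Jq + (k:ℚ) • 1 - ((((n:ℚ)+(k:ℚ))⁻¹ * (n:ℚ)) • Jq + (((n:ℚ)+(k:ℚ))⁻¹ * (k:ℚ)) • Jq)
          = (k:ℚ) • 1 := by
        rw [← add_smul]
        have h4 : ((n:ℚ)+(k:ℚ))⁻¹ * (n:ℚ) + ((n:ℚ)+(k:ℚ))⁻¹ * (k:ℚ) = 1 := by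
          field_simp
        rw [h4, one_smul]; abel
      rw [h5, smul_smul, inv_mul_cancel₀ hknz, one_smul]
    have hABq : φ A * φ Bᵀ = Jq + (k:ℚ) • 1 := by
      rw [← _root_.map_mul, hAB]
      ext i j
      simp only [hφ, RingHom.mapMatrix_apply, Matrix.map_apply, Matrix.add_apply,
        Matrix.of_apply, Matrix.smul_apply, Matrix.one_apply, smul_eq_mul, hJq]
      split <;> simp
    have hright : φ A * (φ Bᵀ * E) = 1 := by
      rw [← Matrix.mul_assoc, hABq, hprod]
    have hAunit : IsUnit (φ A) :=
      ⟨⟨φ A, φ Bᵀ * E, hright, mul_eq_one_comm.mp hright⟩, rfl⟩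
    have h5 : φ A * φ X = φ A * 0 := by
      rw [mul_zero, ← _root_.map_mul, hAX, map_zero]
    have h6 : φ X = 0 := hAunit.mul_left_cancel h5
    ext i j
    have h7 := congrFun (congrFun h6 i) j
    simp only [hφ, RingHom.mapMatrix_apply, Matrix.map_apply, Matrix.zero_apply,
      Int.castRingHom, RingHom.coe_mk, MonoidHom.coe_mk, OneHom.coe_mk] at h7
    exact_mod_cast h7
  have hkey : ∀ i j, ((n:ℤ) + k) * ((Bᵀ * A) i j - (if i = j then k else 0)) = c i * d j := by
    intro i j
    have h := congrFun (congrFun hX0 i) j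
    simp only [hX_def, Matrix.of_apply, Matrix.zero_apply] at h
    linarith
  -- positivity of c and d
  have hcpos : ∀ i, 1 ≤ c i := by
    intro i
    have hnn : (0:ℤ) ≤ c i := Finset.sum_nonneg fun l _ => by rcases hB l i with h | h <;> simp [h]
    rcases lt_or_eq_of_le hnn with h | h
    · omega
    · exfalso
      have hz : ∀ l, B l i = 0 := by
        intro l
        have h8 := (Finset.sum_eq_zero_iff_of_nonneg (fun l _ => by
          rcases hB l i with h' | h' <;> simp [h'] : ∀ l ∈ Finset.univ, (0:ℤ) ≤ B l i)).mp h.symm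
        exact h8 l (Finset.mem_univ l)
      have hzero : (Bᵀ * A) i i = 0 := by
        rw [Matrix.mul_apply]
        exact Finset.sum_eq_zero fun l _ => by simp [Matrix.transpose_apply, hz l]
      have h9 := hkey i i
      rw [hzero, ← h] at h9
      simp at h9
      rcases h9 with h' | h' <;> omega
  have hdpos : ∀ j, 1 ≤ d j := by
    intro j
    have hnn : (0:ℤ) ≤ d j := Finset.sum_nonneg fun l _ => by rcases hA l j with h | h <;> simp [h]
    rcases lt_or_eq_of_le hnn with h | h
    · omega
    · exfalso
      have hz : ∀ l, A l j = 0 := by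
        intro l
        have h8 := (Finset.sum_eq_zero_iff_of_nonneg (fun l _ => by
          rcases hA l j with h' | h' <;> simp [h'] : ∀ l ∈ Finset.univ, (0:ℤ) ≤ A l j)).mp h.symm
        exact h8 l (Finset.mem_univ l)
      have hzero : (Bᵀ * A) j j = 0 := by
        rw [Matrix.mul_apply]
        exact Finset.sum_eq_zero fun l _ => by simp [hz l]
      have h9 := hkey j j
      rw [hzero, ← h] at h9
      simp at h9
      rcases h9 with h' | h' <;> omega
  -- c i * d j ≥ n + k
  have hlb : ∀ i j, (n:ℤ) + k ≤ c i * d j := by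
    intro i j
    have h := hkey i j
    have hpos : 0 < c i * d j := mul_pos (by linarith [hcpos i]) (by linarith [hdpos j])
    set m := (Bᵀ * A) i j - (if i = j then k else 0) with hm
    have hmpos : 0 < m := by nlinarith
    nlinarith
  -- diagonal equality
  have hdiag : ∀ i, c i * d i = (n:ℤ) + k := by
    intro i
    by_contra hne
    have hlt : (n:ℤ) + k < c i * d i := lt_of_le_of_ne (hlb i i) (Ne.symm hne)
    have h10 : ∑ l : Fin n, ((n:ℤ) + k) < ∑ l, c l * d l :=
      Finset.sum_lt_sum (fun l _ => hlb l l) ⟨i, Finset.mem_univ i, hlt⟩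
    rw [hsum] at h10
    simp at h10
  -- all equal
  have hall : ∀ i j, c i * d j = (n:ℤ) + k := by
    intro i j
    have h1 : (c i * d j) * (c j * d i) = ((n:ℤ)+k) * ((n:ℤ)+k) := by
      nlinarith [hdiag i, hdiag j]
    have h2 := hlb i j
    have h3 := hlb j i
    nlinarith
  -- commutation
  have hcomm : Bᵀ * A = A * Bᵀ := by
    rw [hAB]
    ext i j
    have h := hkey i j
    rw [hall i j] at h
    have h' : (Bᵀ * A) i j - (if i = j then k else 0) = 1 :=
      mul_left_cancel₀ (ne_of_gt hnk) (h.trans (mul_one _).symm)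
    have h'' : (Bᵀ * A) i j = 1 + (if i = j then k else 0) := by linarith
    rw [h'']
    simp only [Matrix.add_apply, Matrix.of_apply, Matrix.smul_apply, Matrix.one_apply,
      smul_eq_mul, mul_ite, mul_one, mul_zero]
  have hn0 : 0 < n := by omega
  set i0 : Fin n := ⟨0, hn0⟩ with hi0
  have hs0 : c i0 ≠ 0 := by have := hcpos i0; omega
  have hr0 : d i0 ≠ 0 := by have := hdpos i0; omega
  have hcall : ∀ i, c i = c i0 :=
    fun i => mul_right_cancel₀ hr0 ((hall i i0).trans (hall i0 i0).symm)
  have hdall : ∀ j, d j = d i0 :=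
    fun j => mul_left_cancel₀ hs0 ((hall i0 j).trans (hall i0 i0).symm)
  refine ⟨hcomm, d i0, c i0, ?_, ?_, ?_, ?_, ?_⟩
  · intro i
    have h := hAc i
    rw [Finset.sum_congr (rfl : (Finset.univ : Finset (Fin n)) = Finset.univ) (fun j _ => by rw [hcall j])] at h
    rw [← Finset.sum_mul] at h
    refine mul_right_cancel₀ hs0 (h.trans ?_)
    rw [mul_comm]
    exact (hall i0 i0).symm
  · intro j
    exact hdall j
  · intro i
    have h := hBd i
    rw [Finset.sum_congr (rfl : (Finset.univ : Finset (Fin n)) = Finset.univ) (fun j _ => by rw [hdall j])] at h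
    rw [← Finset.sum_mul] at h
    exact mul_right_cancel₀ hr0 (h.trans (hall i0 i0).symm)
  · intro j
    exact hcall j
  · rw [mul_comm]
    exact hall i0 i0
end

section
/- If (A,B) is a Lehman pair of n×n (0,1)-matrices with AB^T = J + kI, then the Hadamard product A∘B is a (k+1)-regular (0,1)-matrix: every row and every column of A∘B sums to k+1. -/
open Matrix BigOperators
open Finset

private lemma sum01_pos {n : ℕ} (f : Fin n → ℚ) (h01 : ∀ l, f l = 0 ∨ f l = 1)
    (hpos : 0 < ∑ l, f l) : 1 ≤ ∑ l, f l := by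
  by_cases h : ∀ l, f l = 0
  · simp [h] at hpos
  · push_neg at h
    obtain ⟨l, hl⟩ := h
    have hfl : f l = 1 := (h01 l).resolve_left hl
    calc (1:ℚ) = f l := hfl.symm
    _ ≤ ∑ l, f l := Finset.single_le_sum
        (fun i _ => by rcases h01 i with h|h <;> simp [h]) (mem_univ l)

private lemma key {n : ℕ} (A C : Matrix (Fin n) (Fin n) ℚ)
    (hA : ∀ i j, A i j = 0 ∨ A i j = 1) (hC : ∀ i j, C i j = 0 ∨ C i j = 1)
    (k : ℚ) (hk : 1 ≤ k)
    (hAC : A * C = Matrix.of (fun _ _ => 1) + k • 1) :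
    ∀ j, (C * A) j j = k + 1 := by
  set J : Matrix (Fin n) (Fin n) ℚ := Matrix.of (fun _ _ => 1) with hJ
  have hn0 : (0:ℚ) ≤ n := Nat.cast_nonneg n
  have hk0 : (0:ℚ) < k := by linarith
  have hnk : (0:ℚ) < n + k := by linarith
  -- J * J = n • J
  have hJJ : J * J = (n:ℚ) • J := by
    ext i j
    simp [hJ, Matrix.mul_apply]
  -- invertibility of A
  have hD : (J + k • 1) * ((k⁻¹) • (1 - ((n+k)⁻¹) • J)) = 1 := by
    rw [Matrix.mul_smul, mul_sub, mul_one, Matrix.mul_smul, add_mul, hJJ,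
      Matrix.smul_mul, one_mul]
    have hcomb : (↑n:ℚ) • J + k • J = ((↑n:ℚ)+k) • J := (add_smul _ _ _).symm
    rw [hcomb, smul_smul, inv_mul_cancel₀ (by linarith : (n:ℚ)+k ≠ 0), one_smul,
      add_sub_cancel_left, smul_smul, inv_mul_cancel₀ (ne_of_gt hk0), one_smul]
  haveI : Invertible A := invertibleOfRightInverse A (C * ((k⁻¹) • (1 - ((n+k)⁻¹) • J)))
    (by rw [← mul_assoc, hAC, hD])
  -- column sums of A, scaled row sums of C
  set w : Fin n → ℚ := fun j => ∑ l, A l j with hw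
  set v : Fin n → ℚ := fun i => (∑ l, C i l) / (n + k) with hv
  -- ∑ over a row of A*C is n + k
  have hrowAC : ∀ i, ∑ m, (A * C) i m = n + k := by
    intro i
    rw [hAC]
    simp [Matrix.one_apply, Finset.sum_add_distrib, hJ]
  have hAv : ∀ i, ∑ l, A i l * v l = 1 := by
    intro i
    have : ∑ l, A i l * (∑ m, C l m) = n + k := by
      calc ∑ l, A i l * (∑ m, C l m) = ∑ l, ∑ m, A i l * C l m := by
            simp [Finset.mul_sum]
        _ = ∑ m, ∑ l, A i l * C l m := Finset.sum_comm
        _ = ∑ m, (A * C) i m := by simp [Matrix.mul_apply]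
        _ = n + k := hrowAC i
    simp only [hv, div_eq_mul_inv, ← mul_assoc]
    rw [← Finset.sum_mul]
    rw [this, mul_inv_cancel₀ (by linarith : (n:ℚ)+k ≠ 0)]
  -- main identity: C*A = k•1 + v wᵀ
  have hcalc : A * (C * A) = A * (k • 1 + vecMulVec v w) := by
    rw [← mul_assoc, hAC]
    ext i j
    rw [Matrix.mul_apply, Matrix.mul_apply]
    have lhs : ∑ l, (J + k • 1) i l * A l j = w j + k * A i j := by
      simp only [Matrix.add_apply, Matrix.smul_apply, Matrix.one_apply, hJ, Matrix.of_apply,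
        smul_eq_mul, mul_ite, mul_one, mul_zero, add_mul, one_mul]
      rw [Finset.sum_add_distrib]
      simp only [ite_mul, zero_mul]
      rw [Finset.sum_ite_eq univ i (fun x => k * A x j)]
      simp [hw]
    have rhs : ∑ l, A i l * (k • 1 + vecMulVec v w) l j = k * A i j + (∑ l, A i l * v l) * w j := by
      simp only [Matrix.add_apply, Matrix.smul_apply, Matrix.one_apply, Matrix.vecMulVec_apply,
        smul_eq_mul, mul_ite, mul_one, mul_zero, mul_add, Finset.sum_mul]
      rw [Finset.sum_add_distrib]
      congr 1
      · rw [Finset.sum_ite_eq' univ j (fun x => A i x * k)]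
        simp [mul_comm]
      · apply Finset.sum_congr rfl; intro l _; ring
    rw [lhs, rhs, hAv i, one_mul, add_comm]
  have hM : C * A = k • 1 + vecMulVec v w := by
    have h2 := congrArg (fun X => ⅟A * X) hcalc
    simpa only [← mul_assoc, invOf_mul_self, one_mul] using h2
  have hdiag : ∀ i, (C * A) i i = k + v i * w i := by
    intro i
    rw [hM]
    simp [Matrix.one_apply, Matrix.vecMulVec_apply]
  have hoff : ∀ i j, i ≠ j → (C * A) i j = v i * w j := by
    intro i j hij
    rw [hM]
    simp [Matrix.one_apply, Matrix.vecMulVec_apply, hij]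
  -- entry formula and 0/1 terms
  have hterm01 : ∀ i j l, C i l * A l j = 0 ∨ C i l * A l j = 1 := by
    intro i j l
    rcases hC i l with h|h <;> rcases hA l j with h'|h' <;> simp [h, h']
  have hentry : ∀ i j, (C * A) i j = ∑ l, C i l * A l j := fun i j => Matrix.mul_apply
  -- positivity of v and w
  have hv_nonneg : ∀ i, 0 ≤ v i := by
    intro i
    apply div_nonneg _ (le_of_lt hnk)
    exact Finset.sum_nonneg fun l _ => by rcases hC i l with h|h <;> simp [h]
  have hw_nonneg : ∀ j, 0 ≤ w j :=
    fun j => Finset.sum_nonneg fun l _ => by rcases hA l j with h|h <;> simp [h]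
  have hv_pos : ∀ i, 0 < v i := by
    intro i
    rcases lt_or_eq_of_le (hv_nonneg i) with h|h
    · exact h
    · exfalso
      have hsum0 : ∑ l, C i l = 0 := by
        have := h.symm
        rw [hv] at this
        field_simp at this
        simpa using this
      have hCz : ∀ l, C i l = 0 := by
        intro l
        have := (Finset.sum_eq_zero_iff_of_nonneg
          (fun l _ => by rcases hC i l with h|h <;> simp [h] : ∀ l ∈ univ, (0:ℚ) ≤ C i l)).1 hsum0
        exact this l (mem_univ l)
      have h1 : (C * A) i i = 0 := by
        rw [hentry]
        exact Finset.sum_eq_zero fun l _ => by simp [hCz l]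
      have h2 : (C * A) i i = k := by rw [hdiag, ← h, mul_comm]; ring
      rw [h1] at h2; linarith
  have hw_pos : ∀ j, 0 < w j := by
    intro j
    rcases lt_or_eq_of_le (hw_nonneg j) with h|h
    · exact h
    · exfalso
      have hAz : ∀ l, A l j = 0 := by
        intro l
        have := (Finset.sum_eq_zero_iff_of_nonneg
          (fun l _ => by rcases hA l j with h|h <;> simp [h] : ∀ l ∈ univ, (0:ℚ) ≤ A l j)).1 h.symm
        exact this l (mem_univ l)
      have h1 : (C * A) j j = 0 := by
        rw [hentry]
        exact Finset.sum_eq_zero fun l _ => by simp [hAz l]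
      have h2 : (C * A) j j = k := by rw [hdiag, ← h]; ring
      rw [h1] at h2; linarith
  have hoff_ge : ∀ i j, i ≠ j → 1 ≤ v i * w j := by
    intro i j hij
    rw [← hoff i j hij, hentry]
    apply sum01_pos _ (fun l => hterm01 i j l)
    rw [← hentry, hoff i j hij]
    exact mul_pos (hv_pos i) (hw_pos j)
  have htr : ∑ i, v i * w i = n := by
    have t1 : (C * A).trace = (A * C).trace := (Matrix.trace_mul_comm A C).symm
    have t2 : (A * C).trace = n * (1 + k) := by
      rw [hAC]
      simp [Matrix.trace, Matrix.diag, Matrix.one_apply, hJ, Finset.sum_add_distrib, mul_add]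
    have t3 : (C * A).trace = n * k + ∑ i, v i * w i := by
      simp only [Matrix.trace, Matrix.diag]
      rw [Finset.sum_congr rfl (fun i _ => hdiag i), Finset.sum_add_distrib]
      simp [mul_comm]
    rw [t3, t2] at t1
    linarith
  set a : Fin n → ℚ := fun i => v i * w i with ha
  have ha_pos : ∀ i, 0 < a i := fun i => mul_pos (hv_pos i) (hw_pos i)
  have ha_ge : ∀ i, 1 ≤ a i := by
    intro i
    have hn1 : 0 < n := i.pos
    have hsplit : a i + ∑ j ∈ univ.erase i, a j = n := by
      rw [Finset.add_sum_erase univ a (mem_univ i)]; exact htr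
    have hlow : ∀ j ∈ univ.erase i, 1 / a i ≤ a j := by
      intro j hj
      have hij : i ≠ j := fun h => (Finset.mem_erase.1 hj).1 h.symm
      have h1 : 1 ≤ (v i * w j) * (v j * w i) := by
        nlinarith [hoff_ge i j hij, hoff_ge j i (Ne.symm hij)]
      have h2 : 1 ≤ a i * a j := by
        have he : a i * a j = v i * w j * (v j * w i) := by simp only [ha]; ring
        rw [he]; exact h1
      rw [div_le_iff₀ (ha_pos i)]
      linarith [mul_comm (a i) (a j) ▸ h2]
    have hcard : (univ.erase i).card = n - 1 := by
      rw [Finset.card_erase_of_mem (mem_univ i), Finset.card_univ, Fintype.card_fin]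
    have hcast : ((n - 1 : ℕ) : ℚ) = (n : ℚ) - 1 := by
      rw [Nat.cast_sub hn1]; simp
    have hsum_low : ((n:ℚ) - 1) * (1 / a i) ≤ ∑ j ∈ univ.erase i, a j := by
      calc ((n:ℚ) - 1) * (1 / a i) = ∑ _j ∈ univ.erase i, 1 / a i := by
            rw [Finset.sum_const, hcard, nsmul_eq_mul, hcast]
        _ ≤ _ := Finset.sum_le_sum hlow
    rcases Nat.lt_or_ge n 2 with h2|h2
    · have hne : n = 1 := by omega
      subst hne
      have hz : ∑ j ∈ univ.erase i, a j = 0 :=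
        Finset.sum_eq_zero fun j hj =>
          absurd (Subsingleton.elim j i) (Finset.mem_erase.1 hj).1
      rw [hz] at hsplit
      norm_num at hsplit
      linarith
    · by_contra hlt
      push_neg at hlt
      have hn2 : (2:ℚ) ≤ n := by exact_mod_cast h2
      have hineq : a i + ((n:ℚ) - 1) * (1 / a i) ≤ n := by linarith
      have hmul := mul_le_mul_of_nonneg_right hineq (le_of_lt (ha_pos i))
      have hinv : (1 / a i) * a i = 1 := by
        rw [one_div, inv_mul_cancel₀ (ne_of_gt (ha_pos i))]
      nlinarith [hmul, hinv, mul_pos (by linarith : (0:ℚ) < 1 - a i)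
        (by linarith : (0:ℚ) < (n:ℚ) - 1 - a i)]
  have ha_eq : ∀ i, a i = 1 := by
    intro i
    have hn1 : 0 < n := i.pos
    have hsplit : a i + ∑ j ∈ univ.erase i, a j = n := by
      rw [Finset.add_sum_erase univ a (mem_univ i)]; exact htr
    have hcard : (univ.erase i).card = n - 1 := by
      rw [Finset.card_erase_of_mem (mem_univ i), Finset.card_univ, Fintype.card_fin]
    have hcast : ((n - 1 : ℕ) : ℚ) = (n : ℚ) - 1 := by
      rw [Nat.cast_sub hn1]; simp
    have hub : ((n:ℚ) - 1) ≤ ∑ j ∈ univ.erase i, a j := by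
      calc ((n:ℚ) - 1) = ∑ _j ∈ univ.erase i, (1:ℚ) := by
            rw [Finset.sum_const, hcard, nsmul_eq_mul, hcast, mul_one]
        _ ≤ _ := Finset.sum_le_sum fun j hj => ha_ge j
    have := ha_ge i
    linarith
  intro j
  rw [hdiag j]
  have := ha_eq j
  rw [ha] at this
  simp only at this
  rw [this]

/-- For a Lehman pair (A,B), the Hadamard product A∘B is a (k+1)-regular (0,1)-matrix. -/
theorem stmt5 {n : ℕ} (A B : Matrix (Fin n) (Fin n) ℤ)
    (hA : is01 A) (hB : is01 B) (k : ℤ) (hk : k = -1 ∨ 1 ≤ k)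
    (hAB : A * Bᵀ = Matrix.of (fun _ _ => (1 : ℤ)) + k • 1) :
    is01 (Matrix.hadamard A B) ∧
    (∀ i, ∑ j, Matrix.hadamard A B i j = k + 1) ∧
    (∀ j, ∑ i, Matrix.hadamard A B i j = k + 1) := by
  have hada : ∀ i j, Matrix.hadamard A B i j = A i j * B i j := fun i j => rfl
  have hterm : ∀ i j, A i j * B i j = 0 ∨ A i j * B i j = 1 := fun i j => by
    rcases hA i j with h|h <;> rcases hB i j with h'|h' <;> simp [h, h']
  have hABe : ∀ i j, ∑ l, A i l * B j l = 1 + k * (if i = j then 1 else 0) := by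
    intro i j
    have h := Matrix.ext_iff.2 hAB i j
    rw [Matrix.mul_apply] at h
    rw [Matrix.add_apply, Matrix.smul_apply] at h
    simpa [Matrix.transpose_apply, Matrix.one_apply] using h
  have hrow : ∀ i, ∑ j, A i j * B i j = k + 1 := by
    intro i
    have := hABe i i
    simp at this
    rw [this]; ring
  refine ⟨fun i j => by rw [hada]; exact hterm i j, fun i => by
    simpa only [hada] using hrow i, ?_⟩
  rcases hk with hk' | hk'
  · -- k = -1 : all entries of the Hadamard product vanish
    have hzero : ∀ i j, A i j * B i j = 0 := by
      intro i j
      have h0 : ∑ l, A i l * B i l = 0 := by rw [hrow i, hk']; ring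
      exact (Finset.sum_eq_zero_iff_of_nonneg
        (fun l _ => by rcases hterm i l with h|h <;> simp [h])).1 h0 j (Finset.mem_univ j)
    intro j
    simp only [hada]
    rw [Finset.sum_eq_zero (fun i _ => hzero i j), hk']
    ring
  · -- k ≥ 1 : use the rational key lemma
    set A' : Matrix (Fin n) (Fin n) ℚ := A.map (Int.cast : ℤ → ℚ) with hA'
    set C' : Matrix (Fin n) (Fin n) ℚ := Bᵀ.map (Int.cast : ℤ → ℚ) with hC'
    have hA01 : ∀ i j, A' i j = 0 ∨ A' i j = 1 := by
      intro i j
      rcases hA i j with h|h <;> simp [hA', Matrix.map_apply, h]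
    have hC01 : ∀ i j, C' i j = 0 ∨ C' i j = 1 := by
      intro i j
      rcases hB j i with h|h <;> simp [hC', Matrix.map_apply, Matrix.transpose_apply, h]
    have hkQ : (1:ℚ) ≤ (k:ℚ) := by exact_mod_cast hk'
    have hAC' : A' * C' = Matrix.of (fun _ _ => 1) + (k:ℚ) • 1 := by
      ext i j
      rw [Matrix.mul_apply]
      have h := hABe i j
      have : ∑ l, A' i l * C' l j = ((∑ l, A i l * B j l : ℤ) : ℚ) := by
        push_cast
        exact Finset.sum_congr rfl fun l _ => by
          simp [hA', hC', Matrix.map_apply, Matrix.transpose_apply]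
      rw [this, h]
      by_cases hij : i = j <;> simp [hij, Matrix.one_apply]
    have hkey := key A' C' hA01 hC01 (k:ℚ) hkQ hAC'
    intro j
    have h1 : (C' * A') j j = ((∑ i, B i j * A i j : ℤ) : ℚ) := by
      rw [Matrix.mul_apply]
      push_cast
      exact Finset.sum_congr rfl fun i _ => by
        simp [hA', hC', Matrix.map_apply, Matrix.transpose_apply]
    rw [hkey j] at h1
    have h2 : (∑ i, B i j * A i j : ℤ) = k + 1 := by exact_mod_cast h1.symm
    simp only [hada]
    rw [← h2]
    exact Finset.sum_congr rfl fun i _ => mul_comm _ _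
end

section
/- Let A be the bipartite adjacency matrix of a cubic Lehman graph with k=1, and let B be the (0,1)-matrix satisfying AB^T = J + I. If b_1 ≠ b_2 are distinct black vertices and w is a white vertex with A(b_1,w) = A(b_2,w) = 1, then for every white vertex w' ≠ w, at least one of B(b_1,w') and B(b_2,w') equals zero. -/
open Matrix BigOperators

/-- In a cubic Lehman graph with k = 1: if two distinct black vertices share a white
neighbour w, then their mates share no white vertex other than possibly w. -/
theorem stmt6 {V W : Type*} [Fintype V] [Fintype W] [DecidableEq V] [DecidableEq W]
    (A B : Matrix V W ℤ) (hA : is01 A) (hB : is01 B)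
    (hArow : ∀ b, ∑ w, A b w = 3) (hAcol : ∀ w, ∑ b, A b w = 3)
    (hAB : A * Bᵀ = Matrix.of (fun _ _ => (1 : ℤ)) + 1)
    (b₁ b₂ : V) (hb : b₁ ≠ b₂) (w : W)
    (h1 : A b₁ w = 1) (h2 : A b₂ w = 1) :
    ∀ w' : W, w' ≠ w → B b₁ w' = 0 ∨ B b₂ w' = 0 := by
  classical
  -- card V = card W
  have hcard : Fintype.card V = Fintype.card W := by
    have h3 : (3 : ℤ) * Fintype.card V = 3 * Fintype.card W := by
      have := Finset.sum_comm (s := Finset.univ) (t := Finset.univ)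
        (f := fun (b : V) (x : W) => A b x)
      simp only [hArow, hAcol, Finset.sum_const, Finset.card_univ, nsmul_eq_mul] at this
      linarith [this]
    have := mul_left_cancel₀ (by norm_num : (3:ℤ) ≠ 0) h3
    exact_mod_cast this
  -- pass to ℚ
  set A' : Matrix V W ℚ := A.map (Int.cast) with hA'def
  set B' : Matrix V W ℚ := B.map (Int.cast) with hB'def
  have hAB' : A' * B'ᵀ = Matrix.of (fun _ _ => (1 : ℚ)) + 1 := by
    ext i j
    have := congrFun (congrFun hAB i) j
    simp only [Matrix.mul_apply, Matrix.add_apply, Matrix.of_apply, Matrix.one_apply,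
      Matrix.transpose_apply] at this ⊢
    simp only [hA'def, hB'def, Matrix.map_apply]
    by_cases hij : i = j
    · simp only [hij, if_true] at this ⊢
      exact_mod_cast this
    · simp only [hij, if_false] at this ⊢
      exact_mod_cast this
  set n : ℕ := Fintype.card V with hn
  have hn1 : ((n : ℚ) + 1) ≠ 0 := by positivity
  -- inverse of J + 1
  set C : Matrix V V ℚ := 1 - ((n : ℚ) + 1)⁻¹ • Matrix.of (fun _ _ => (1 : ℚ)) with hC
  have hJC : (Matrix.of (fun _ _ => (1 : ℚ)) + 1) * C = 1 := by
    rw [hC, mul_sub, add_mul, add_mul, mul_one, mul_one, Matrix.mul_smul, Matrix.mul_smul,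
      Matrix.one_mul]
    have hJJ : (Matrix.of (fun _ _ => (1 : ℚ))) * (Matrix.of (fun _ _ => (1 : ℚ)))
        = (n : ℚ) • Matrix.of (fun (_ _ : V) => (1 : ℚ)) := by
      ext i j
      simp [Matrix.mul_apply, hn, Finset.card_univ]
    rw [hJJ, smul_smul]
    ext i j
    simp only [Matrix.add_apply, Matrix.sub_apply, Matrix.smul_apply, Matrix.of_apply,
      smul_eq_mul, mul_one]
    field_simp
    ring
  -- J*A' = A'*J
  have hJA : (Matrix.of (fun (_ _ : V) => (1 : ℚ))) * A' = A' * Matrix.of (fun (_ _ : W) => (1 : ℚ)) := by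
    ext i j
    have hr : ∑ x, A' i x = 3 := by
      simp only [hA'def, Matrix.map_apply]
      exact_mod_cast congrArg (Int.cast : ℤ → ℚ) (hArow i)
    have hc : ∑ b, A' b j = 3 := by
      simp only [hA'def, Matrix.map_apply]
      exact_mod_cast congrArg (Int.cast : ℤ → ℚ) (hAcol j)
    simp [Matrix.mul_apply, hr, hc]
  -- A' has a right inverse M
  set M : Matrix W V ℚ := B'ᵀ * C with hM
  have hAM : A' * M = 1 := by
    rw [hM, ← Matrix.mul_assoc, hAB', hJC]
  have hMA : M * A' = 1 := (Matrix.mul_eq_one_comm_of_equiv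
    (Fintype.equivOfCardEq hcard)).mp hAM
  -- B'ᵀ * A' = J + 1
  have hBA : B'ᵀ * A' = Matrix.of (fun (_ _ : W) => (1 : ℚ)) + 1 := by
    have : M * ((A' * B'ᵀ) * A') = M * (A' * (Matrix.of (fun (_ _ : W) => (1 : ℚ)) + 1)) := by
      rw [hAB', Matrix.mul_add, Matrix.mul_one, Matrix.add_mul, Matrix.one_mul, hJA]
    rw [← Matrix.mul_assoc, ← Matrix.mul_assoc, hMA, Matrix.one_mul,
      ← Matrix.mul_assoc, hMA, Matrix.one_mul] at this
    exact this
  intro w' hw'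
  -- entry (w', w) of B'ᵀ * A' equals 1
  have hentry : ∑ b, B b w' * A b w = 1 := by
    have := congrFun (congrFun hBA w') w
    simp only [Matrix.mul_apply, Matrix.add_apply, Matrix.of_apply, Matrix.one_apply,
      Matrix.transpose_apply, if_neg hw'] at this
    have : ((∑ b, B b w' * A b w : ℤ) : ℚ) = 1 := by
      push_cast
      simpa [hA'def, hB'def, Matrix.map_apply] using this
    exact_mod_cast this
  by_contra hcon
  push_neg at hcon
  obtain ⟨hB1, hB2⟩ := hcon
  have hB1' : B b₁ w' = 1 := (hB b₁ w').resolve_left hB1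
  have hB2' : B b₂ w' = 1 := (hB b₂ w').resolve_left hB2
  -- sum splits off b₁ and b₂, rest nonneg
  have hnonneg : ∀ b ∈ (Finset.univ.erase b₁).erase b₂, 0 ≤ B b w' * A b w := by
    intro b _
    rcases hB b w' with h | h <;> rcases hA b w with h' | h' <;> simp [h, h']
  have hsum : ∑ b, B b w' * A b w
      = B b₁ w' * A b₁ w + (B b₂ w' * A b₂ w + ∑ b ∈ (Finset.univ.erase b₁).erase b₂,
        B b w' * A b w) := by
    rw [← Finset.add_sum_erase _ _ (Finset.mem_univ b₁),
      ← Finset.add_sum_erase _ _ (Finset.mem_erase.mpr ⟨Ne.symm hb, Finset.mem_univ b₂⟩)]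
  rw [hsum, hB1', hB2', h1, h2] at hentry
  have := Finset.sum_nonneg hnonneg
  linarith
end

section
/- Let G be an r-regular Lehman graph with k=1 and r ≥ 3, with vertex set partitioned into copies of K_{r-1,r-1}. Then the compressed graph c(G,P), obtained by identifying all black vertices of each block to a single black vertex and all white vertices of each block to a single white vertex (with b_X adjacent to w_Y iff X = Y or some black vertex of X is adjacent to some white vertex of Y), is an r-regular bipartite graph. -/
open Matrix BigOperators

lemma sum01 {W : Type*} (v : W → ℤ) (hv : ∀ w, v w = 0 ∨ v w = 1) (s : Finset W) :
    ∑ w ∈ s, v w = ((s.filter (fun w => v w = 1)).card : ℤ) := by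
  calc ∑ w ∈ s, v w = ∑ w ∈ s, (if v w = 1 then (1:ℤ) else 0) :=
        Finset.sum_congr rfl (fun w _ => by rcases hv w with h|h <;> simp [h])
    _ = _ := by rw [Finset.sum_boole]

lemma ncard_filter {α ι : Type*} [Fintype α] [DecidableEq ι] (β : α → ι) (i : ι) :
    ({a | β a = i} : Set α).ncard = (Finset.univ.filter (fun a => β a = i)).card := by
  rw [← Set.ncard_coe_finset]
  congr 1
  ext a
  simp


/-- From `A Bᵀ = J + I` (plus regularity of `A`) derive `Bᵀ A = J + I`. -/
lemma lehman_flip {V W : Type*} [Fintype V] [Fintype W] [DecidableEq V] [DecidableEq W]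
    (A B : Matrix V W ℤ) (r : ℕ) (hr : 0 < r)
    (hrow : ∀ b, ∑ w, A b w = r) (hcol : ∀ w, ∑ b, A b w = r)
    (h1 : ∀ b b', ∑ w, A b w * B b' w = 1 + if b = b' then 1 else 0) :
    ∀ w w', ∑ b, B b w * A b w' = 1 + if w = w' then 1 else 0 := by
  have hrZ : ((r : ℤ)) ≠ 0 := by exact_mod_cast hr.ne'
  have hcard : Fintype.card W = Fintype.card V := by
    have e1 : ∑ b : V, ∑ w : W, A b w = (Fintype.card V : ℤ) * r := by
      simp [hrow, Finset.sum_const, mul_comm]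
    have e2 : ∑ b : V, ∑ w : W, A b w = (Fintype.card W : ℤ) * r := by
      calc _ = ∑ w : W, ∑ b : V, A b w := Finset.sum_comm
        _ = _ := by simp [hcol, Finset.sum_const, mul_comm]
    have : (Fintype.card W : ℤ) = (Fintype.card V : ℤ) :=
      mul_right_cancel₀ hrZ (e2 ▸ e1)
    exact_mod_cast this
  let e : W ≃ V := Fintype.equivOfCardEq hcard
  set n : ℚ := (Fintype.card V : ℚ) with hn
  let A' : Matrix V V ℚ := Matrix.of fun i j => (A i (e.symm j) : ℚ)
  let B' : Matrix V V ℚ := Matrix.of fun i j => (B i (e.symm j) : ℚ)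
  let J : Matrix V V ℚ := Matrix.of fun _ _ => 1
  have hJJ : J * J = n • J := by
    ext i j
    simp [Matrix.mul_apply, J, hn]
  have hAJ : A' * J = (r:ℚ) • J := by
    ext i j
    have := Equiv.sum_comp e.symm (fun w => (A i w : ℚ))
    simp only [Matrix.mul_apply, Matrix.smul_apply, Matrix.of_apply, A', J, mul_one, smul_eq_mul]
    rw [this]
    rw [show (∑ w, (A i w : ℚ)) = ((∑ w, A i w : ℤ) : ℚ) by push_cast; ring]
    rw [hrow i]
    push_cast
    ring
  have hJA : J * A' = (r:ℚ) • J := by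
    ext i j
    simp only [Matrix.mul_apply, Matrix.smul_apply, Matrix.of_apply, A', J, one_mul, smul_eq_mul]
    rw [show (∑ b, (A b (e.symm j) : ℚ)) = ((∑ b, A b (e.symm j) : ℤ) : ℚ) by push_cast; ring]
    rw [hcol]
    push_cast
    ring
  have hABq : A' * B'ᵀ = J + 1 := by
    ext i j
    have hs := Equiv.sum_comp e.symm (fun w => (A i w : ℚ) * (B j w : ℚ))
    simp only [Matrix.mul_apply, Matrix.transpose_apply, Matrix.of_apply, A', B',
      Matrix.add_apply, Matrix.one_apply, J]
    rw [hs]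
    rw [show (∑ w, (A i w : ℚ) * (B j w : ℚ)) = ((∑ w, A i w * B j w : ℤ) : ℚ) by push_cast; ring]
    rw [h1 i j]
    split <;> push_cast <;> ring
  have hn1 : n + 1 ≠ 0 := by
    have : (0:ℚ) ≤ n := by rw [hn]; positivity
    linarith
  have hJ1J : (J + 1) * J = (n+1) • J := by
    rw [Matrix.add_mul, Matrix.one_mul, hJJ, add_smul, one_smul]
  have hinv : (J + 1) * (1 - (n+1)⁻¹ • J) = 1 := by
    rw [Matrix.mul_sub, Matrix.mul_one, Matrix.mul_smul, hJ1J, smul_smul,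
      inv_mul_cancel₀ hn1, one_smul]
    abel
  have hAC : A' * (B'ᵀ * (1 - (n+1)⁻¹ • J)) = 1 := by
    rw [← Matrix.mul_assoc, hABq, hinv]
  have : Invertible A' := invertibleOfRightInverse _ _ hAC
  have hBT : B'ᵀ = ⅟A' * (J + 1) := by
    rw [← hABq, ← Matrix.mul_assoc, invOf_mul_self, Matrix.one_mul]
  have hiAJ : ⅟A' * J = (r:ℚ)⁻¹ • J := by
    have h := congrArg (fun M => ⅟A' * M) hAJ
    rw [← Matrix.mul_assoc, invOf_mul_self, Matrix.one_mul, Matrix.mul_smul] at h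
    have hrq : ((r:ℚ)) ≠ 0 := by exact_mod_cast hr.ne'
    calc ⅟A' * J = (r:ℚ)⁻¹ • ((r:ℚ) • (⅟A' * J)) := by
          rw [smul_smul, inv_mul_cancel₀ hrq, one_smul]
      _ = (r:ℚ)⁻¹ • J := by rw [← h]
  have hBA : B'ᵀ * A' = J + 1 := by
    have hrq : ((r:ℚ)) ≠ 0 := by exact_mod_cast hr.ne'
    rw [hBT, Matrix.mul_assoc, Matrix.add_mul, Matrix.one_mul, hJA, Matrix.mul_add,
      Matrix.mul_smul, hiAJ, invOf_mul_self, smul_smul, mul_inv_cancel₀ hrq, one_smul]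
  intro w w'
  have h := congrFun (congrFun hBA (e w)) (e w')
  simp only [Matrix.mul_apply, Matrix.transpose_apply, Matrix.of_apply, A', B',
    Matrix.add_apply, Matrix.one_apply, J, Equiv.symm_apply_apply] at h
  have hiff : (e w = e w') ↔ (w = w') := e.apply_eq_iff_eq
  have h' : ((∑ b, B b w * A b w' : ℤ) : ℚ) = ((1 + if w = w' then 1 else 0 : ℤ) : ℚ) := by
    push_cast
    rw [h, if_congr hiff rfl rfl]
  exact_mod_cast h'


/-- Unique "outside" neighbour of each black vertex. -/
lemma outside_unique {V W ι : Type*} [Fintype V] [Fintype W] [Fintype ι]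
    [DecidableEq V] [DecidableEq W] [DecidableEq ι]
    (A : Matrix V W ℤ) (hA : is01 A) (r : ℕ) (hr : 3 ≤ r)
    (hrow : ∀ b, ∑ w, A b w = r)
    (βb : V → ι) (βw : W → ι)
    (hwhite : ∀ i, ({w | βw w = i} : Set W).ncard = r - 1)
    (hcomplete : ∀ b w, βb b = βw w → A b w = 1) :
    ∀ b : V, ∃ w0, βw w0 ≠ βb b ∧ A b w0 = 1 ∧
      ∀ w, βw w ≠ βb b → A b w = 1 → w = w0 := by
  intro b
  have hwhiteF : (Finset.univ.filter (fun w => βw w = βb b)).card = r - 1 := by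
    rw [← ncard_filter, hwhite]
  have hsplit := Finset.sum_filter_add_sum_filter_not Finset.univ
    (fun w => βw w = βb b) (A b)
  rw [hrow b] at hsplit
  have hfirst : ∑ w ∈ Finset.univ.filter (fun w => βw w = βb b), A b w = ((r:ℤ) - 1) := by
    rw [Finset.sum_congr rfl (fun w hw => hcomplete b w ((Finset.mem_filter.mp hw).2).symm)]
    rw [Finset.sum_const, hwhiteF, nsmul_eq_mul, mul_one]
    omega
  have hsecond : ∑ w ∈ Finset.univ.filter (fun w => ¬ βw w = βb b), A b w = 1 := by
    rw [hfirst] at hsplit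
    linarith
  rw [sum01 (A b) (fun w => hA b w)] at hsecond
  have hc : ((Finset.univ.filter (fun w => ¬ βw w = βb b)).filter
      (fun w => A b w = 1)).card = 1 := by exact_mod_cast hsecond
  rw [Finset.card_eq_one] at hc
  obtain ⟨w0, hw0⟩ := hc
  have hmem : w0 ∈ (Finset.univ.filter (fun w => ¬ βw w = βb b)).filter
      (fun w => A b w = 1) := hw0 ▸ Finset.mem_singleton_self w0
  rw [Finset.mem_filter, Finset.mem_filter] at hmem
  refine ⟨w0, hmem.1.2, hmem.2, fun w hw1 hw2 => ?_⟩
  have : w ∈ (Finset.univ.filter (fun w => ¬ βw w = βb b)).filter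
      (fun w => A b w = 1) := by
    rw [Finset.mem_filter, Finset.mem_filter]
    exact ⟨⟨Finset.mem_univ w, hw1⟩, hw2⟩
  rw [hw0, Finset.mem_singleton] at this
  exact this

lemma master {V W ι : Type*} [Fintype V] [Fintype W] [Fintype ι]
    [DecidableEq V] [DecidableEq W] [DecidableEq ι]
    (A B : Matrix V W ℤ) (hA : is01 A) (hB : is01 B) (r : ℕ) (hr : 3 ≤ r)
    (hrow : ∀ b, ∑ w, A b w = r) (hcol : ∀ w, ∑ b, A b w = r)
    (h1 : ∀ b b', ∑ w, A b w * B b' w = 1 + if b = b' then 1 else 0)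
    (h2 : ∀ w w', ∑ b, B b w * A b w' = 1 + if w = w' then 1 else 0)
    (βb : V → ι) (βw : W → ι)
    (hblack : ∀ i, ({b | βb b = i} : Set V).ncard = r - 1)
    (hwhite : ∀ i, ({w | βw w = i} : Set W).ncard = r - 1)
    (hcomplete : ∀ b w, βb b = βw w → A b w = 1) :
    ∀ X, ({Y | X = Y ∨ ∃ b w, βb b = X ∧ βw w = Y ∧ A b w = 1} : Set ι).ncard = r := by
  -- unique outside white neighbour f of each black vertex
  obtain ⟨f, hf⟩ := Classical.axiomOfChoice
    (outside_unique A hA r hr hrow βb βw hwhite hcomplete)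
  have hf1 : ∀ b, βw (f b) ≠ βb b := fun b => (hf b).1
  have hf2 : ∀ b, A b (f b) = 1 := fun b => (hf b).2.1
  have hf3 : ∀ b w, βw w ≠ βb b → A b w = 1 → w = f b := fun b => (hf b).2.2
  -- unique outside black neighbour g of each white vertex
  have hcol' : ∀ w : W, ∑ b, Aᵀ w b = r := fun w => hcol w
  obtain ⟨g, hg⟩ := Classical.axiomOfChoice
    (outside_unique Aᵀ (fun w b => hA b w) r hr hcol' βw βb
      (fun i => hblack i) (fun w b h => hcomplete b w h.symm))
  have hg1 : ∀ w, βb (g w) ≠ βw w := fun w => (hg w).1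
  have hg2 : ∀ w, A (g w) w = 1 := fun w => (hg w).2.1
  have hg3 : ∀ w b, βb b ≠ βw w → A b w = 1 → b = g w := fun w => (hg w).2.2
  have rowStruct0 : ∀ b w, βw w ≠ βb b → w ≠ f b → A b w = 0 := by
    intro b w hw hwf
    rcases hA b w with h | h
    · exact h
    · exact absurd (hf3 b w hw h) hwf
  have colStruct0 : ∀ b w, βb b ≠ βw w → b ≠ g w → A b w = 0 := by
    intro b w hb hbg
    rcases hA b w with h | h
    · exact h
    · exact absurd (hg3 w b hb h) hbg
  -- splitting the Lehman sum along a block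
  have rowsum_split : ∀ b b' : V, ∑ w, A b w * B b' w =
      (∑ w ∈ Finset.univ.filter (fun w => βw w = βb b), B b' w) + B b' (f b) := by
    intro b b'
    rw [← Finset.sum_filter_add_sum_filter_not Finset.univ (fun w => βw w = βb b)
      (fun w => A b w * B b' w)]
    congr 1
    · exact Finset.sum_congr rfl (fun w hw => by
        rw [hcomplete b w ((Finset.mem_filter.mp hw).2).symm, one_mul])
    · have hstep : ∑ w ∈ Finset.univ.filter (fun w => ¬ βw w = βb b),
          A b w * B b' w = A b (f b) * B b' (f b) := by
        apply Finset.sum_eq_single_of_mem (f b)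
        · simp [hf1 b]
        · intro w hw hwf
          rw [rowStruct0 b w (Finset.mem_filter.mp hw).2 hwf, zero_mul]
      rw [hstep, hf2 b, one_mul]
  have colsum_split : ∀ w w' : W, ∑ b, B b w' * A b w =
      (∑ b ∈ Finset.univ.filter (fun b => βb b = βw w), B b w') + B (g w) w' := by
    intro w w'
    rw [← Finset.sum_filter_add_sum_filter_not Finset.univ (fun b => βb b = βw w)
      (fun b => B b w' * A b w)]
    congr 1
    · exact Finset.sum_congr rfl (fun b hb => by
        rw [hcomplete b w ((Finset.mem_filter.mp hb).2), mul_one])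
    · have hstep : ∑ b ∈ Finset.univ.filter (fun b => ¬ βb b = βw w),
          B b w' * A b w = B (g w) w' * A (g w) w := by
        apply Finset.sum_eq_single_of_mem (g w)
        · simp [hg1 w]
        · intro b hb hbg
          rw [colStruct0 b w (Finset.mem_filter.mp hb).2 hbg, mul_zero]
      rw [hstep, hg2 w, mul_one]
  have hBnonneg : ∀ b w, (0:ℤ) ≤ B b w := by
    intro b w; rcases hB b w with h | h <;> omega
  -- step B : within a block, distinct blacks have distinct outside whites
  have stepB : ∀ b1 b2, βb b1 = βb b2 → f b1 = f b2 → b1 = b2 := by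
    intro b1 b2 hX hF
    by_contra hne
    have e1 := h1 b1 b2
    have e2 := h1 b2 b2
    rw [rowsum_split b1 b2] at e1
    rw [rowsum_split b2 b2] at e2
    rw [hX, hF] at e1
    rw [e1] at e2
    simp [hne] at e2
  -- step C : outside whites of distinct blacks of a block lie in distinct blocks
  have stepC : ∀ b1 b2, βb b1 = βb b2 → βw (f b1) = βw (f b2) → b1 = b2 := by
    intro b1 b2 hX hY
    by_contra hne
    have hw12 : f b1 ≠ f b2 := fun h => hne (stepB b1 b2 hX h)
    -- c1 : every black vertex of block Y has B-entry 0 at w1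
    have c1 : ∀ b', βb b' = βw (f b1) → B b' (f b1) = 0 := by
      intro b' hb'
      by_contra hBne
      have hB1 : B b' (f b1) = 1 := (hB b' (f b1)).resolve_left hBne
      have hb1b' : b1 ≠ b' := fun h => hf1 b1 (hb'.symm.trans (congrArg βb h).symm)
      have hb2b' : b2 ≠ b' := fun h =>
        hf1 b1 (hb'.symm.trans ((congrArg βb h).symm.trans hX.symm))
      -- eq1, eq2
      have eq1 := h1 b1 b'
      have eq2 := h1 b2 b'
      rw [rowsum_split b1 b'] at eq1
      rw [rowsum_split b2 b'] at eq2
      rw [if_neg hb1b'] at eq1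
      rw [if_neg hb2b'] at eq2
      rw [← hX] at eq2
      rw [hB1] at eq1
      -- t = 0
      have ht : ∑ w ∈ Finset.univ.filter (fun w => βw w = βb b1), B b' w = 0 := by linarith
      have hB2 : B b' (f b2) = 1 := by rw [ht] at eq2; linarith
      -- a second black vertex of block Y
      have hblackF : (Finset.univ.filter (fun b => βb b = βw (f b1))).card = r - 1 := by
        rw [← ncard_filter, hblack]
      have hcard2 : 1 < (Finset.univ.filter (fun b => βb b = βw (f b1))).card := by omega
      obtain ⟨b'', hb''mem, hb''ne⟩ := Finset.exists_mem_ne hcard2 b'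
      have hb''Y : βb b'' = βw (f b1) := (Finset.mem_filter.mp hb''mem).2
      -- q ≤ 1
      have eq3 := h1 b'' b'
      rw [rowsum_split b'' b'] at eq3
      rw [if_neg hb''ne] at eq3
      rw [hb''Y] at eq3
      have hq : ∑ w ∈ Finset.univ.filter (fun w => βw w = βw (f b1)), B b' w ≤ 1 := by
        have := hBnonneg b' (f b'')
        linarith
      -- but q ≥ 2
      have hpair : ({f b1, f b2} : Finset W) ⊆
          Finset.univ.filter (fun w => βw w = βw (f b1)) := by
        intro w hw
        rw [Finset.mem_insert, Finset.mem_singleton] at hw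
        rcases hw with h | h <;> subst h <;> simp [hY]
      have hsum2 : ∑ w ∈ ({f b1, f b2} : Finset W), B b' w = 2 := by
        rw [Finset.sum_pair hw12, hB1, hB2]
        norm_num
      have hle := Finset.sum_le_sum_of_subset_of_nonneg hpair
        (fun w _ _ => hBnonneg b' w)
      rw [hsum2] at hle
      linarith
    -- g (f b1) = b1
    have hgf : g (f b1) = b1 :=
      (hg3 (f b1) b1 (fun h => hf1 b1 h.symm) (hf2 b1)).symm
    -- final contradiction via h2 at (w1, w1)
    have efin := h2 (f b1) (f b1)
    rw [colsum_split (f b1) (f b1)] at efin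
    rw [hgf] at efin
    have hzero : ∑ b ∈ Finset.univ.filter (fun b => βb b = βw (f b1)), B b (f b1) = 0 :=
      Finset.sum_eq_zero (fun b hb => c1 b (Finset.mem_filter.mp hb).2)
    rw [hzero, if_pos rfl] at efin
    rcases hB b1 (f b1) with h | h <;> omega
  -- the degree count
  intro X
  have hset : ({Y | X = Y ∨ ∃ b w, βb b = X ∧ βw w = Y ∧ A b w = 1} : Set ι) =
      insert X ((fun b => βw (f b)) '' {b | βb b = X}) := by
    ext Y
    simp only [Set.mem_setOf_eq, Set.mem_insert_iff, Set.mem_image]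
    constructor
    · rintro (h | ⟨b, w, hb, hw, hAw⟩)
      · exact Or.inl h.symm
      · by_cases hXY : βw w = βb b
        · exact Or.inl (by rw [← hw, hXY, hb])
        · have hwf : w = f b := hf3 b w hXY hAw
          exact Or.inr ⟨b, hb, by rw [← hwf, hw]⟩
    · rintro (h | ⟨b, hb, hfb⟩)
      · exact Or.inl h.symm
      · exact Or.inr ⟨b, f b, hb, hfb, hf2 b⟩
  rw [hset]
  have hinj : Set.InjOn (fun b => βw (f b)) {b | βb b = X} :=
    fun b1 hb1 b2 hb2 he => stepC b1 b2 (hb1.trans hb2.symm) he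
  have hXnot : X ∉ (fun b => βw (f b)) '' {b | βb b = X} := by
    rintro ⟨b, hb, he⟩
    exact hf1 b (he.trans hb.symm)
  rw [Set.ncard_insert_of_notMem hXnot (Set.toFinite _),
    Set.ncard_image_of_injOn hinj, hblack]
  omega

/-- Compressing each biclique of a partition of an r-regular Lehman graph with k = 1
to an edge yields an r-regular bipartite graph. -/
theorem stmt8 {V W ι : Type*} [Fintype V] [Fintype W] [Fintype ι]
    [DecidableEq V] [DecidableEq W] [DecidableEq ι]
    (A : Matrix V W ℤ) (hA : is01 A) (r : ℕ) (hr : 3 ≤ r)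
    (hrow : ∀ b, ∑ w, A b w = r) (hcol : ∀ w, ∑ b, A b w = r)
    (B : Matrix V W ℤ) (hB : is01 B)
    (hAB : A * Bᵀ = Matrix.of (fun _ _ => (1 : ℤ)) + 1)
    (βb : V → ι) (βw : W → ι)
    (hblack : ∀ i, ({b | βb b = i} : Set V).ncard = r - 1)
    (hwhite : ∀ i, ({w | βw w = i} : Set W).ncard = r - 1)
    (hcomplete : ∀ b w, βb b = βw w → A b w = 1)
    -- the adjacency relation of the compressed graph c(G,P)
    (Adj' : ι → ι → Prop)
    (hAdj' : ∀ X Y, Adj' X Y ↔ (X = Y ∨ ∃ b w, βb b = X ∧ βw w = Y ∧ A b w = 1)) :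
    (∀ X, ({Y | Adj' X Y} : Set ι).ncard = r) ∧
    (∀ Y, ({X | Adj' X Y} : Set ι).ncard = r) := by
  have h1 : ∀ b b', ∑ w, A b w * B b' w = 1 + if b = b' then 1 else 0 := by
    intro b b'
    have h := congrFun (congrFun hAB b) b'
    simpa [Matrix.mul_apply, Matrix.one_apply, Matrix.transpose_apply,
      Matrix.add_apply, Matrix.of_apply] using h
  have h2 : ∀ w w', ∑ b, B b w * A b w' = 1 + if w = w' then 1 else 0 :=
    lehman_flip A B r (by omega) hrow hcol h1
  constructor
  · intro X
    have hm := master A B hA hB r hr hrow hcol h1 h2 βb βw hblack hwhite hcomplete X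
    have hset : ({Y | Adj' X Y} : Set ι) =
        {Y | X = Y ∨ ∃ b w, βb b = X ∧ βw w = Y ∧ A b w = 1} :=
      Set.ext (fun Y => hAdj' X Y)
    rw [hset, hm]
  · intro Y
    have h1' : ∀ (w w' : W), ∑ b, Aᵀ w b * Bᵀ w' b = 1 + if w = w' then 1 else 0 := by
      intro w w'
      rw [show (∑ b, Aᵀ w b * Bᵀ w' b) = ∑ b, B b w' * A b w from
        Finset.sum_congr rfl fun b _ => mul_comm _ _, h2 w' w, if_congr eq_comm rfl rfl]
    have h2' : ∀ (b b' : V), ∑ w, Bᵀ w b * Aᵀ w b' = 1 + if b = b' then 1 else 0 := by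
      intro b b'
      rw [show (∑ w, Bᵀ w b * Aᵀ w b') = ∑ w, A b' w * B b w from
        Finset.sum_congr rfl fun w _ => mul_comm _ _, h1 b' b, if_congr eq_comm rfl rfl]
    have hm := master Aᵀ Bᵀ (fun w b => hA b w) (fun w b => hB b w) r hr
      (fun w => hcol w) (fun b => hrow b) h1' h2' βw βb hwhite hblack
      (fun w b h => hcomplete b w h.symm) Y
    have hset : ({X | Adj' X Y} : Set ι) =
        {X | Y = X ∨ ∃ w b, βw w = Y ∧ βb b = X ∧ Aᵀ w b = 1} := by
      ext X
      rw [Set.mem_setOf_eq, Set.mem_setOf_eq, hAdj' X Y]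
      constructor
      · rintro (h | ⟨b, w, hb, hw, hAw⟩)
        · exact Or.inl h.symm
        · exact Or.inr ⟨w, b, hw, hb, hAw⟩
      · rintro (h | ⟨w, b, hw, hb, hAw⟩)
        · exact Or.inl h.symm
        · exact Or.inr ⟨b, w, hb, hw, hAw⟩
    rw [hset, hm]
end

section
/- Let G be an r-regular Lehman graph with k=1 and r ≥ 3, and let P be a partition of V(G) into copies of K_{r-1,r-1}. Then the compression c(G,P) is an r-regular Lehman graph with k = -1. -/
open Matrix BigOperators
open scoped Classical

open Finset

lemma two_le_sum' {α : Type*} (S : Finset α) (g : α → ℤ)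
    (h0 : ∀ a ∈ S, 0 ≤ g a) (a b : α) (ha : a ∈ S) (hb : b ∈ S) (hne : a ≠ b)
    (hga : 1 ≤ g a) (hgb : 1 ≤ g b) : 2 ≤ ∑ x ∈ S, g x := by
  classical
  have h1 : g a + ∑ x ∈ S.erase a, g x = ∑ x ∈ S, g x := Finset.add_sum_erase S g ha
  have hbe : b ∈ S.erase a := Finset.mem_erase.mpr ⟨fun h => hne h.symm, hb⟩
  have h2 : g b ≤ ∑ x ∈ S.erase a, g x :=
    Finset.single_le_sum (fun i hi => h0 i (Finset.mem_of_mem_erase hi)) hbe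
  linarith

lemma binary_sum_one {α : Type*} (S : Finset α) (g : α → ℤ)
    (hg : ∀ a, g a = 0 ∨ g a = 1) (h : ∑ a ∈ S, g a = 1) :
    ∃ w ∈ S, g w = 1 ∧ ∀ w' ∈ S, g w' = 1 → w' = w := by
  classical
  have hex : ∃ w ∈ S, g w = 1 := by
    by_contra h0
    push_neg at h0
    have : ∑ a ∈ S, g a = 0 :=
      Finset.sum_eq_zero fun a ha => (hg a).resolve_right (h0 a ha)
    omega
  obtain ⟨w, hw, hgw⟩ := hex
  refine ⟨w, hw, hgw, ?_⟩
  intro w' hw' hgw'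
  by_contra hne
  have h0 : ∀ a ∈ S, 0 ≤ g a := fun a _ => by rcases hg a with h | h <;> omega
  have := two_le_sum' S g h0 w w' hw hw' (fun h => hne h.symm) (by omega) (by omega)
  omega

lemma sum_ind_eq_ite {α ι : Type*} [DecidableEq ι] (S : Finset α) (g : α → ι) (Z : ι)
    (hinj : ∀ a1 ∈ S, ∀ a2 ∈ S, g a1 = g a2 → a1 = a2) :
    (∑ a ∈ S, if g a = Z then (1 : ℤ) else 0) = if ∃ a ∈ S, g a = Z then 1 else 0 := by
  classical
  by_cases h : ∃ a ∈ S, g a = Z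
  · obtain ⟨a0, ha0, hga0⟩ := h
    rw [if_pos ⟨a0, ha0, hga0⟩]
    rw [Finset.sum_eq_single_of_mem a0 ha0]
    · rw [if_pos hga0]
    · intro b hb hne
      rw [if_neg]
      intro hgb
      exact hne (hinj b hb a0 ha0 (hgb.trans hga0.symm))
  · rw [if_neg h]
    apply Finset.sum_eq_zero
    intro a ha
    rw [if_neg]
    intro hz
    exact h ⟨a, ha, hz⟩

lemma rowSum_aux {V ι : Type*} [Fintype ι] [DecidableEq V] [DecidableEq ι]
    (S : Finset V) (g : V → ι) (X : ι)
    (hg : ∀ b ∈ S, g b ≠ X)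
    (hinj : ∀ a1 ∈ S, ∀ a2 ∈ S, g a1 = g a2 → a1 = a2) :
    (∑ Y : ι, if X = Y ∨ ∃ b ∈ S, g b = Y then (1 : ℤ) else 0) = 1 + S.card := by
  classical
  have hsplit : ∀ Y : ι, (if X = Y ∨ ∃ b ∈ S, g b = Y then (1 : ℤ) else 0)
      = (if X = Y then 1 else 0) + (if ∃ b ∈ S, g b = Y then 1 else 0) := by
    intro Y
    by_cases h1 : X = Y
    · have h2 : ¬ ∃ b ∈ S, g b = Y := by
        rintro ⟨b, hb, hgb⟩
        exact hg b hb (hgb.trans h1.symm)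
      simp [h1, h2]
    · by_cases h2 : ∃ b ∈ S, g b = Y <;> simp [h1, h2]
  rw [Finset.sum_congr rfl fun Y _ => hsplit Y, Finset.sum_add_distrib]
  have e1 : (∑ Y : ι, if X = Y then (1 : ℤ) else 0) = 1 := by
    rw [Finset.sum_ite_eq Finset.univ X (fun _ => (1 : ℤ))]
    simp
  have e2 : (∑ Y : ι, if ∃ b ∈ S, g b = Y then (1 : ℤ) else 0) = S.card := by
    rw [Finset.sum_boole]
    congr 1
    have : Finset.univ.filter (fun Y => ∃ b ∈ S, g b = Y) = S.image g := by
      ext Y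
      simp [Finset.mem_image]
    rw [this, Finset.card_image_of_injOn fun a ha b hb => hinj a ha b hb]
  rw [e1, e2]

lemma core_lemma {V W ι : Type*} [Fintype W] [DecidableEq V] [DecidableEq ι]
    (βb : V → ι) (βw : W → ι) (B : V → W → ℤ) (e : V → W)
    (hB : ∀ b w, B b w = 0 ∨ B b w = 1)
    (hb2 : ∀ X : ι, ∃ b1 b2 : V, b1 ≠ b2 ∧ βb b1 = X ∧ βb b2 = X)
    (C1 : ∀ b b' : V, (∑ w ∈ Finset.univ.filter (fun w => βw w = βb b), B b' w) + B b' (e b)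
      = 1 + (if b = b' then 1 else 0)) :
    (∀ (b' : V) (X : ι), (∑ w ∈ Finset.univ.filter (fun w => βw w = X), B b' w) = 0
        ∨ (∑ w ∈ Finset.univ.filter (fun w => βw w = X), B b' w) = 1)
    ∧ (∀ b : V, (∑ w ∈ Finset.univ.filter (fun w => βw w = βb b), B b w) = 1)
    ∧ (∀ b b' : V, βb b = βb b' → B b' (e b) = if b = b' then 1 else 0) := by
  classical
  have hone : ∀ b : V, (∑ w ∈ Finset.univ.filter (fun w => βw w = βb b), B b w) = 1 := by
    intro b
    obtain ⟨b1, b2, hne, h1, h2⟩ := hb2 (βb b)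
    obtain ⟨b'', hb''ne, hb''⟩ : ∃ b'' : V, b'' ≠ b ∧ βb b'' = βb b := by
      by_cases h : b1 = b
      · refine ⟨b2, fun hh => hne ?_, h2⟩
        rw [hh, h]
      · exact ⟨b1, h, h1⟩
    have hc1 := C1 b b
    have hc2 := C1 b'' b
    rw [hb''] at hc2
    rw [if_pos rfl] at hc1
    rw [if_neg hb''ne] at hc2
    rcases hB b (e b) with h | h <;> rcases hB b (e b'') with h' | h' <;> omega
  refine ⟨?_, hone, ?_⟩
  · intro b' X
    obtain ⟨b1, b2, hne, h1, h2⟩ := hb2 X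
    obtain ⟨b, hbne, hb⟩ : ∃ b : V, b ≠ b' ∧ βb b = X := by
      by_cases h : b1 = b'
      · refine ⟨b2, fun hh => hne ?_, h2⟩
        rw [hh, h]
      · exact ⟨b1, h, h1⟩
    have hc := C1 b b'
    rw [hb, if_neg hbne] at hc
    rcases hB b' (e b) with h | h <;> omega
  · intro b b' hbb
    by_cases h : b = b'
    · subst h
      have hc := C1 b b
      rw [hone b, if_pos rfl] at hc
      rw [if_pos rfl]
      omega
    · have hc := C1 b b'
      rw [hbb, hone b', if_neg h] at hc
      rw [if_neg h]
      omega

lemma blockInj {V W ι : Type*} [Fintype V] [Fintype W] [DecidableEq V] [DecidableEq W] [DecidableEq ι]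
    (βb : V → ι) (βw : W → ι) (B : V → W → ℤ) (e : V → W)
    (hB : ∀ b w, B b w = 0 ∨ B b w = 1)
    (heb : ∀ b, βw (e b) ≠ βb b)
    (einj : Function.Injective e)
    (C1 : ∀ b b' : V, (∑ w ∈ Finset.univ.filter (fun w => βw w = βb b), B b' w) + B b' (e b)
      = 1 + (if b = b' then 1 else 0))
    (hsig : ∀ b : V, (∑ w ∈ Finset.univ.filter (fun w => βw w = βb b), B b w) = 1)
    (htau : ∀ w : W, (∑ b ∈ Finset.univ.filter (fun b => βb b = βw w), B b w) = 1) :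
    ∀ b1 b2 : V, b1 ≠ b2 → βb b1 = βb b2 → βw (e b1) ≠ βw (e b2) := by
  classical
  intro b1 b2 hne hXX hYY
  have hw12 : e b1 ≠ e b2 := fun h => hne (einj h)
  -- key1 : blacks in block Y = βw (e b1) have equal B-values at e b1, e b2
  have key1 : ∀ b'', βb b'' = βw (e b1) → B b'' (e b1) = B b'' (e b2) := by
    intro b'' hb''
    have hne1 : b1 ≠ b'' := by
      intro h
      rw [← h] at hb''
      exact heb b1 hb''.symm
    have hne2 : b2 ≠ b'' := by
      intro h
      rw [← h, ← hXX] at hb''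
      exact heb b1 hb''.symm
    have hc1 := C1 b1 b''
    have hc2 := C1 b2 b''
    rw [if_neg hne1] at hc1
    rw [if_neg hne2, ← hXX] at hc2
    omega
  have key2 : ∀ b'', βb b'' = βw (e b1) → B b'' (e b1) = 0 := by
    intro b'' hb''
    by_contra h0
    have h1 : B b'' (e b1) = 1 := (hB b'' (e b1)).resolve_left h0
    have h2 : B b'' (e b2) = 1 := by rw [← key1 b'' hb'']; exact h1
    have hs := hsig b''
    have hmem1 : e b1 ∈ Finset.univ.filter (fun w => βw w = βb b'') := by
      simp [hb''.symm]
    have hmem2 : e b2 ∈ Finset.univ.filter (fun w => βw w = βb b'') := by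
      simp [hb''.symm, ← hYY]
    have h2le := two_le_sum' _ (B b'') (fun a _ => by rcases hB b'' a with h | h <;> omega)
      (e b1) (e b2) hmem1 hmem2 hw12 (by omega) (by omega)
    omega
  have ht := htau (e b1)
  have : (∑ b ∈ Finset.univ.filter (fun b => βb b = βw (e b1)), B b (e b1)) = 0 :=
    Finset.sum_eq_zero fun b hb => key2 b (by simpa using hb)
  omega


lemma dual_lehman {V W : Type*} [Fintype V] [Fintype W] [DecidableEq V] [DecidableEq W]
    (A B : Matrix V W ℤ) (r : ℕ) (hr : 0 < r)
    (hrow : ∀ b, ∑ w, A b w = r) (hcol : ∀ w, ∑ b, A b w = r)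
    (hAB : A * Bᵀ = Matrix.of (fun _ _ => (1 : ℤ)) + 1) :
    ∀ w w', (∑ b, B b w * A b w') = 1 + (if w = w' then 1 else 0) := by
  classical
  have hcards : Fintype.card V = Fintype.card W := by
    have h1 : (∑ b : V, ∑ w : W, A b w) = (Fintype.card V : ℤ) * r := by
      rw [Finset.sum_congr rfl fun b _ => hrow b]
      simp [Finset.sum_const, mul_comm]
    have h2 : (∑ b : V, ∑ w : W, A b w) = (Fintype.card W : ℤ) * r := by
      rw [show (∑ b : V, ∑ w : W, A b w) = ∑ w : W, ∑ b : V, A b w from Finset.sum_comm,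
        Finset.sum_congr rfl fun w _ => hcol w]
      simp [Finset.sum_const, mul_comm]
    have h3 : (Fintype.card V : ℤ) * r = (Fintype.card W : ℤ) * r := by rw [← h1, ← h2]
    have hrne : (r : ℤ) ≠ 0 := by exact_mod_cast hr.ne'
    have := mul_right_cancel₀ hrne h3
    exact_mod_cast this
  have eqv : V ≃ W := Fintype.equivOfCardEq hcards
  set Aq : Matrix V V ℚ := Matrix.of (fun i j => (A i (eqv j) : ℚ)) with hAq
  set Bq : Matrix V V ℚ := Matrix.of (fun i j => (B i (eqv j) : ℚ)) with hBq
  set Jv : Matrix V V ℚ := Matrix.of (fun _ _ => (1 : ℚ)) with hJv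
  have hABq : Aq * Bqᵀ = Jv + 1 := by
    ext i j
    have h := congrArg (fun M => M i j) hAB
    simp only [Matrix.mul_apply, Matrix.transpose_apply, Matrix.add_apply,
      Matrix.of_apply, Matrix.one_apply, hAq, hBq, hJv] at h ⊢
    have hre : (∑ k : V, (A i (eqv k) : ℚ) * (B j (eqv k) : ℚ))
        = ∑ w : W, (A i w : ℚ) * (B j w : ℚ) :=
      Equiv.sum_comp eqv (fun w => (A i w : ℚ) * (B j w : ℚ))
    rw [hre]
    have h2 : ((∑ w : W, A i w * B j w : ℤ) : ℚ) = ((1 + if i = j then 1 else 0 : ℤ) : ℚ) := by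
      rw [h]
    push_cast at h2
    rw [h2]
  have hrowq : Aq * Jv = (r : ℚ) • Jv := by
    ext i j
    simp only [Matrix.mul_apply, Matrix.of_apply, Matrix.smul_apply, smul_eq_mul, mul_one,
      hAq, hJv]
    have hre : (∑ k : V, (A i (eqv k) : ℚ)) = ∑ w : W, (A i w : ℚ) :=
      Equiv.sum_comp eqv (fun w => (A i w : ℚ))
    rw [hre]
    have h2 : ((∑ w : W, A i w : ℤ) : ℚ) = ((r : ℤ) : ℚ) := by exact_mod_cast congrArg Int.cast (hrow i)
    push_cast at h2
    rw [h2]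
  have hcolq : Jv * Aq = (r : ℚ) • Jv := by
    ext i j
    simp only [Matrix.mul_apply, Matrix.of_apply, Matrix.smul_apply, smul_eq_mul, one_mul,
      mul_one, hAq, hJv]
    have h2 : ((∑ b : V, A b (eqv j) : ℤ) : ℚ) = ((r : ℤ) : ℚ) := by
      exact_mod_cast congrArg Int.cast (hcol (eqv j))
    push_cast at h2
    rw [h2]
  have hJJ : Jv * Jv = ((Fintype.card V : ℚ)) • Jv := by
    ext i j
    simp only [Matrix.mul_apply, Matrix.of_apply, Matrix.smul_apply, smul_eq_mul, mul_one, hJv]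
    rw [Finset.sum_const, Finset.card_univ, nsmul_eq_mul, mul_one]
  have hn1 : ((Fintype.card V : ℚ) + 1) ≠ 0 := by positivity
  set c : ℚ := ((Fintype.card V : ℚ) + 1)⁻¹ with hc
  set K : Matrix V V ℚ := 1 - c • Jv with hK
  have hK2 : K * (Jv + 1) = 1 := by
    rw [hK, Matrix.sub_mul, Matrix.one_mul, Matrix.smul_mul, Matrix.mul_add, hJJ, Matrix.mul_one,
      smul_add, smul_smul, ← add_smul]
    have h2 : c * (Fintype.card V : ℚ) + c = 1 := by
      rw [hc]; field_simp
    rw [h2, one_smul]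
    abel
  have hAqK : Aq * (Bqᵀ * K) = 1 := by
    rw [← Matrix.mul_assoc, hABq]
    exact mul_eq_one_comm.mp hK2
  set C : Matrix V V ℚ := Bqᵀ * K with hC
  have hCA : C * Aq = 1 := mul_eq_one_comm.mp hAqK
  have hrq : (r : ℚ) ≠ 0 := by exact_mod_cast hr.ne'
  have hCJ : C * Jv = (r : ℚ)⁻¹ • Jv := by
    have h1 : C * (Aq * Jv) = Jv := by rw [← Matrix.mul_assoc, hCA, Matrix.one_mul]
    rw [hrowq] at h1
    have h2 : (r : ℚ) • (C * Jv) = Jv := by rw [← Matrix.mul_smul]; exact h1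
    calc C * Jv = (r : ℚ)⁻¹ • ((r : ℚ) • (C * Jv)) := by
          rw [smul_smul, inv_mul_cancel₀ hrq, one_smul]
      _ = (r : ℚ)⁻¹ • Jv := by rw [h2]
  have hBtA : Bqᵀ * Aq = Jv + 1 := by
    have hB' : Bqᵀ = C * Jv + C := by
      calc Bqᵀ = Bqᵀ * 1 := by rw [Matrix.mul_one]
        _ = Bqᵀ * (K * (Jv + 1)) := by rw [hK2]
        _ = C * (Jv + 1) := by rw [hC, Matrix.mul_assoc]
        _ = C * Jv + C := by rw [Matrix.mul_add, Matrix.mul_one]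
    calc Bqᵀ * Aq = (C * Jv + C) * Aq := by rw [← hB']
      _ = C * Jv * Aq + C * Aq := by rw [Matrix.add_mul]
      _ = (r : ℚ)⁻¹ • (Jv * Aq) + 1 := by rw [hCJ, hCA, Matrix.smul_mul]
      _ = (r : ℚ)⁻¹ • ((r : ℚ) • Jv) + 1 := by rw [hcolq]
      _ = Jv + 1 := by rw [smul_smul, inv_mul_cancel₀ hrq, one_smul]
  intro w w'
  have h := congrArg (fun M => M (eqv.symm w) (eqv.symm w')) hBtA
  simp only [Matrix.mul_apply, Matrix.transpose_apply, Matrix.add_apply, Matrix.of_apply,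
    Matrix.one_apply, hAq, hBq, hJv, Equiv.apply_symm_apply] at h
  have hiff : (eqv.symm w = eqv.symm w') ↔ (w = w') := Equiv.apply_eq_iff_eq _
  rw [if_congr hiff rfl rfl] at h
  have h2 : ((∑ b : V, B b w * A b w' : ℤ) : ℚ) = ((1 + if w = w' then 1 else 0 : ℤ) : ℚ) := by
    push_cast
    rw [← h]
  exact_mod_cast h2



/-- Compressing each biclique of a partition of an r-regular Lehman graph with k = 1
yields an r-regular Lehman graph with k = -1. -/
theorem stmt9 {V W ι : Type*} [Fintype V] [Fintype W] [Fintype ι]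
    [DecidableEq V] [DecidableEq W] [DecidableEq ι]
    (A : Matrix V W ℤ) (hA : is01 A) (r : ℕ) (hr : 3 ≤ r)
    (hrow : ∀ b, ∑ w, A b w = r) (hcol : ∀ w, ∑ b, A b w = r)
    (B : Matrix V W ℤ) (hB : is01 B)
    (hAB : A * Bᵀ = Matrix.of (fun _ _ => (1 : ℤ)) + 1)
    (βb : V → ι) (βw : W → ι)
    (hblack : ∀ i, ({b | βb b = i} : Set V).ncard = r - 1)
    (hwhite : ∀ i, ({w | βw w = i} : Set W).ncard = r - 1)
    (hcomplete : ∀ b w, βb b = βw w → A b w = 1)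
    -- the bipartite adjacency matrix of the compressed graph c(G,P)
    (A' : Matrix ι ι ℤ)
    (hA' : ∀ X Y, A' X Y =
      if X = Y ∨ ∃ b w, βb b = X ∧ βw w = Y ∧ A b w = 1 then 1 else 0) :
    is01 A' ∧ (∀ X, ∑ Y, A' X Y = r) ∧ (∀ Y, ∑ X, A' X Y = r) ∧
    ∃ B' : Matrix ι ι ℤ, is01 B' ∧
      A' * B'ᵀ = Matrix.of (fun _ _ => (1 : ℤ)) - 1 := by
  classical
  -- block cardinalities
  have hSbcard : ∀ X : ι, (Finset.univ.filter (fun b => βb b = X)).card = r - 1 := by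
    intro X
    have h := hblack X
    rwa [Set.ncard_eq_toFinset_card', Set.toFinset_setOf] at h
  have hSwcard : ∀ Y : ι, (Finset.univ.filter (fun w => βw w = Y)).card = r - 1 := by
    intro Y
    have h := hwhite Y
    rwa [Set.ncard_eq_toFinset_card', Set.toFinset_setOf] at h
  have hb2 : ∀ X : ι, ∃ b1 b2 : V, b1 ≠ b2 ∧ βb b1 = X ∧ βb b2 = X := by
    intro X
    have h1 : 1 < (Finset.univ.filter (fun b => βb b = X)).card := by
      rw [hSbcard X]; omega
    obtain ⟨a, ha, b, hb, hab⟩ := Finset.one_lt_card.mp h1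
    exact ⟨a, b, hab, by simpa using ha, by simpa using hb⟩
  have hw2 : ∀ Y : ι, ∃ w1 w2 : W, w1 ≠ w2 ∧ βw w1 = Y ∧ βw w2 = Y := by
    intro Y
    have h1 : 1 < (Finset.univ.filter (fun w => βw w = Y)).card := by
      rw [hSwcard Y]; omega
    obtain ⟨a, ha, b, hb, hab⟩ := Finset.one_lt_card.mp h1
    exact ⟨a, b, hab, by simpa using ha, by simpa using hb⟩
  have hbne : ∀ X : ι, ∃ b : V, βb b = X := fun X => by
    obtain ⟨b1, _, _, h1, _⟩ := hb2 X; exact ⟨b1, h1⟩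
  have hwne : ∀ Y : ι, ∃ w : W, βw w = Y := fun Y => by
    obtain ⟨w1, _, _, h1, _⟩ := hw2 Y; exact ⟨w1, h1⟩
  -- definition of e
  have heX : ∀ b : V, ∃ w : W, (βw w ≠ βb b ∧ A b w = 1) ∧
      ∀ w' : W, βw w' ≠ βb b → A b w' = 1 → w' = w := by
    intro b
    have hsplit := Finset.sum_filter_add_sum_filter_not Finset.univ
      (fun w => βw w = βb b) (A b)
    have hin : (∑ w ∈ Finset.univ.filter (fun w => βw w = βb b), A b w) = (r : ℤ) - 1 := by
      have hmem : ∀ w ∈ Finset.univ.filter (fun w => βw w = βb b), A b w = 1 := by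
        intro w hw
        have h2 := (Finset.mem_filter.mp hw).2
        exact hcomplete b w h2.symm
      rw [Finset.sum_congr rfl hmem]
      rw [Finset.sum_const, hSwcard (βb b), nsmul_eq_mul, mul_one]
      omega
    have hout : (∑ w ∈ Finset.univ.filter (fun w => ¬ βw w = βb b), A b w) = 1 := by
      have hr2 := hrow b
      rw [hin, hr2] at hsplit
      linarith
    obtain ⟨w, hwmem, hw1, huniq⟩ := binary_sum_one _ (A b) (fun w => hA b w) hout
    refine ⟨w, ⟨by simpa using hwmem, hw1⟩, fun w' h1 h2 => huniq w' (by simpa using h1) h2⟩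
  choose e he using heX
  have heb : ∀ b, βw (e b) ≠ βb b := fun b => (he b).1.1
  have heA : ∀ b, A b (e b) = 1 := fun b => (he b).1.2
  have heu : ∀ b w, βw w ≠ βb b → A b w = 1 → w = e b := fun b w => (he b).2 w
  -- definition of f
  have hfX : ∀ w : W, ∃ b : V, (βb b ≠ βw w ∧ A b w = 1) ∧
      ∀ b' : V, βb b' ≠ βw w → A b' w = 1 → b' = b := by
    intro w
    have hsplit := Finset.sum_filter_add_sum_filter_not Finset.univ
      (fun b => βb b = βw w) (fun b => A b w)
    have hin : (∑ b ∈ Finset.univ.filter (fun b => βb b = βw w), A b w) = (r : ℤ) - 1 := by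
      have hmem : ∀ b ∈ Finset.univ.filter (fun b => βb b = βw w), A b w = 1 := by
        intro b hb
        exact hcomplete b w (Finset.mem_filter.mp hb).2
      rw [Finset.sum_congr rfl hmem]
      rw [Finset.sum_const, hSbcard (βw w), nsmul_eq_mul, mul_one]
      omega
    have hout : (∑ b ∈ Finset.univ.filter (fun b => ¬ βb b = βw w), A b w) = 1 := by
      have hr2 := hcol w
      rw [hin, hr2] at hsplit
      linarith
    obtain ⟨b, hbmem, hb1, huniq⟩ := binary_sum_one _ (fun b => A b w) (fun b => hA b w) hout
    refine ⟨b, ⟨by simpa using hbmem, hb1⟩, fun b' h1 h2 => huniq b' (by simpa using h1) h2⟩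
  choose f hf using hfX
  have hfw : ∀ w, βb (f w) ≠ βw w := fun w => (hf w).1.1
  have hfA : ∀ w, A (f w) w = 1 := fun w => (hf w).1.2
  have hfu : ∀ w b, βb b ≠ βw w → A b w = 1 → b = f w := fun w b => (hf w).2 b
  have hfe : ∀ b, f (e b) = b := fun b => (hfu (e b) b (Ne.symm (heb b)) (heA b)).symm
  have hef : ∀ w, e (f w) = w := fun w => (heu (f w) w (Ne.symm (hfw w)) (hfA w)).symm
  have einj : Function.Injective e := Function.LeftInverse.injective hfe
  have finj : Function.Injective f := Function.LeftInverse.injective hef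
  have hiff_ef : ∀ b w, e b = w ↔ b = f w := by
    intro b w
    constructor
    · intro h; rw [← h, hfe]
    · intro h; rw [h, hef]
  -- decompositions of A
  have hAdec1 : ∀ b w, A b w = (if βw w = βb b then 1 else 0) + (if w = e b then 1 else 0) := by
    intro b w
    by_cases h1 : βw w = βb b
    · have h2 : w ≠ e b := by
        intro h
        rw [h] at h1
        exact heb b h1
      rw [if_pos h1, if_neg h2, hcomplete b w h1.symm]; ring
    · by_cases h2 : w = e b
      · rw [if_neg h1, if_pos h2, h2, heA b]; ring
      · rw [if_neg h1, if_neg h2]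
        rcases hA b w with h | h
        · rw [h]; ring
        · exact absurd (heu b w h1 h) h2
  have hAdec2 : ∀ b w, A b w = (if βb b = βw w then 1 else 0) + (if b = f w then 1 else 0) := by
    intro b w
    by_cases h1 : βb b = βw w
    · have h2 : b ≠ f w := by
        intro h
        rw [h] at h1
        exact hfw w h1
      rw [if_pos h1, if_neg h2, hcomplete b w h1]; ring
    · by_cases h2 : b = f w
      · rw [if_neg h1, if_pos h2, h2, hfA w]; ring
      · rw [if_neg h1, if_neg h2]
        rcases hA b w with h | h
        · rw [h]; ring
        · exact absurd (hfu w b h1 h) h2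
  -- Lehman identities
  have C1 : ∀ b b' : V, (∑ w ∈ Finset.univ.filter (fun w => βw w = βb b), B b' w) + B b' (e b)
      = 1 + (if b = b' then 1 else 0) := by
    intro b b'
    have h := congrArg (fun M => M b b') hAB
    simp only [Matrix.mul_apply, Matrix.transpose_apply, Matrix.add_apply, Matrix.of_apply,
      Matrix.one_apply] at h
    have hexp : (∑ w, A b w * B b' w)
        = (∑ w ∈ Finset.univ.filter (fun w => βw w = βb b), B b' w) + B b' (e b) := by
      have hpt : ∀ w, A b w * B b' w
          = (if βw w = βb b then B b' w else 0) + (if w = e b then B b' w else 0) := by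
        intro w
        rw [hAdec1 b w, add_mul, ite_mul, ite_mul, one_mul, zero_mul]
      rw [Finset.sum_congr rfl (fun w _ => hpt w), Finset.sum_add_distrib]
      congr 1
      · exact (Finset.sum_filter _ _).symm
      · rw [Finset.sum_ite_eq' Finset.univ (e b) (B b')]
        simp
    rw [hexp] at h
    exact h
  have F2 := dual_lehman A B r (by omega) hrow hcol hAB
  have C2 : ∀ w w' : W, (∑ b ∈ Finset.univ.filter (fun b => βb b = βw w), B b w') + B (f w) w'
      = 1 + (if w = w' then 1 else 0) := by
    intro w w'
    have h := F2 w' w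
    have hexp : (∑ b, B b w' * A b w)
        = (∑ b ∈ Finset.univ.filter (fun b => βb b = βw w), B b w') + B (f w) w' := by
      have hpt : ∀ b, B b w' * A b w
          = (if βb b = βw w then B b w' else 0) + (if b = f w then B b w' else 0) := by
        intro b
        rw [hAdec2 b w, mul_add, mul_ite, mul_one, mul_zero, mul_ite, mul_one, mul_zero]
      rw [Finset.sum_congr rfl (fun b _ => hpt b), Finset.sum_add_distrib]
      congr 1
      · exact (Finset.sum_filter _ _).symm
      · rw [Finset.sum_ite_eq' Finset.univ (f w) (fun b => B b w')]
        simp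
    rw [hexp] at h
    rw [h]
    by_cases hww : w = w'
    · rw [if_pos hww, if_pos hww.symm]
    · rw [if_neg hww, if_neg (Ne.symm hww)]
  obtain ⟨hσbin, hσone, hBe⟩ := core_lemma βb βw (fun b w => B b w) e hB hb2 C1
  obtain ⟨hτbin, hτone, hBf⟩ :=
    core_lemma βw βb (fun w b => B b w) f (fun w b => hB b w) hw2 C2
  have T1 : ∀ b1 b2 : V, b1 ≠ b2 → βb b1 = βb b2 → βw (e b1) ≠ βw (e b2) :=
    blockInj βb βw (fun b w => B b w) e hB heb einj C1 hσone hτone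
  have T1' : ∀ w1 w2 : W, w1 ≠ w2 → βw w1 = βw w2 → βb (f w1) ≠ βb (f w2) :=
    blockInj βw βb (fun w b => B b w) f (fun w b => hB b w) hfw finj C2 hτone hσone
  -- characterizations of A'
  have hA'e : ∀ X Y, A' X Y =
      if X = Y ∨ ∃ b ∈ Finset.univ.filter (fun b => βb b = X), βw (e b) = Y then 1 else 0 := by
    intro X Y
    have hiff : (X = Y ∨ ∃ b w, βb b = X ∧ βw w = Y ∧ A b w = 1) ↔
        (X = Y ∨ ∃ b ∈ Finset.univ.filter (fun b => βb b = X), βw (e b) = Y) := by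
      constructor
      · rintro (h | ⟨b, w, hb, hw, hbw⟩)
        · exact Or.inl h
        · by_cases hXY : X = Y
          · exact Or.inl hXY
          · right
            have hne : βw w ≠ βb b := by
              rw [hw, hb]
              exact fun hh => hXY hh.symm
            have hwe := heu b w hne hbw
            exact ⟨b, by simp [hb], by rw [← hwe]; exact hw⟩
      · rintro (h | ⟨b, hbmem, hbY⟩)
        · exact Or.inl h
        · exact Or.inr ⟨b, e b, by simpa using hbmem, hbY, heA b⟩
    rw [hA' X Y]
    by_cases h : X = Y ∨ ∃ b ∈ Finset.univ.filter (fun b => βb b = X), βw (e b) = Y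
    · rw [if_pos h, if_pos (hiff.mpr h)]
    · rw [if_neg h, if_neg (fun hc => h (hiff.mp hc))]
  have hA'f : ∀ X Y, A' X Y =
      if X = Y ∨ ∃ w ∈ Finset.univ.filter (fun w => βw w = Y), βb (f w) = X then 1 else 0 := by
    intro X Y
    have hiff : (X = Y ∨ ∃ b w, βb b = X ∧ βw w = Y ∧ A b w = 1) ↔
        (X = Y ∨ ∃ w ∈ Finset.univ.filter (fun w => βw w = Y), βb (f w) = X) := by
      constructor
      · rintro (h | ⟨b, w, hb, hw, hbw⟩)
        · exact Or.inl h
        · by_cases hXY : X = Y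
          · exact Or.inl hXY
          · right
            have hne : βb b ≠ βw w := by
              rw [hw, hb]
              exact hXY
            have hbf := hfu w b hne hbw
            exact ⟨w, by simp [hw], by rw [← hbf]; exact hb⟩
      · rintro (h | ⟨w, hwmem, hwX⟩)
        · exact Or.inl h
        · exact Or.inr ⟨f w, w, hwX, by simpa using hwmem, hfA w⟩
    rw [hA' X Y]
    by_cases h : X = Y ∨ ∃ w ∈ Finset.univ.filter (fun w => βw w = Y), βb (f w) = X
    · rw [if_pos h, if_pos (hiff.mpr h)]
    · rw [if_neg h, if_neg (fun hc => h (hiff.mp hc))]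
  -- row and column sums
  have hrowA' : ∀ X, ∑ Y, A' X Y = (r : ℤ) := by
    intro X
    have key := rowSum_aux (Finset.univ.filter (fun b => βb b = X)) (fun b => βw (e b)) X
      (fun b hb => by
        have hbX : βb b = X := by simpa using hb
        rw [← hbX]
        exact heb b)
      (fun a1 h1 a2 h2 heq => by
        by_contra hne
        exact T1 a1 a2 hne (by
          have g1 : βb a1 = X := by simpa using h1
          have g2 : βb a2 = X := by simpa using h2
          rw [g1, g2]) heq)
    have h1 : ∑ Y, A' X Y = (1 : ℤ) + (Finset.univ.filter (fun b => βb b = X)).card := by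
      rw [Finset.sum_congr rfl (fun Y _ => hA'e X Y)]
      convert key using 2
      simp
    rw [h1, hSbcard X]
    omega
  have hcolA' : ∀ Y, ∑ X, A' X Y = (r : ℤ) := by
    intro Y
    have hflip : ∀ X, A' X Y =
        if Y = X ∨ ∃ w ∈ Finset.univ.filter (fun w => βw w = Y), βb (f w) = X then 1 else 0 := by
      intro X
      rw [hA'f X Y]
      by_cases h : Y = X ∨ ∃ w ∈ Finset.univ.filter (fun w => βw w = Y), βb (f w) = X
      · rw [if_pos h, if_pos (Or.elim h (fun hh => Or.inl hh.symm) Or.inr)]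
      · rw [if_neg h, if_neg (fun hc => h (Or.elim hc (fun hh => Or.inl hh.symm) Or.inr))]
    have key := rowSum_aux (Finset.univ.filter (fun w => βw w = Y)) (fun w => βb (f w)) Y
      (fun w hw => by
        have hwY : βw w = Y := by simpa using hw
        rw [← hwY]
        exact hfw w)
      (fun a1 h1 a2 h2 heq => by
        by_contra hne
        exact T1' a1 a2 hne (by
          have g1 : βw a1 = Y := by simpa using h1
          have g2 : βw a2 = Y := by simpa using h2
          rw [g1, g2]) heq)
    have h1 : ∑ X, A' X Y = (1 : ℤ) + (Finset.univ.filter (fun w => βw w = Y)).card := by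
      rw [Finset.sum_congr rfl (fun X _ => hflip X)]
      convert key using 2
      simp
    rw [h1, hSwcard Y]
    omega
  -- the partner matrix
  set B' : Matrix ι ι ℤ := Matrix.of (fun X Y =>
    (∑ b ∈ Finset.univ.filter (fun b => βb b = Y),
      ∑ w ∈ Finset.univ.filter (fun w => βw w = X), B b w)
    - ((r : ℤ) - 2) - (if X = Y then 1 else 0)) with hB'def
  have hB'01 : is01 B' := by
    intro X Y
    rw [hB'def]
    simp only [Matrix.of_apply]
    by_cases hXY : X = Y
    · subst hXY
      left
      have hone : ∀ b ∈ Finset.univ.filter (fun b => βb b = X),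
          (∑ w ∈ Finset.univ.filter (fun w => βw w = X), B b w) = 1 := by
        intro b hb
        have hbX : βb b = X := by simpa using hb
        have h := hσone b
        rw [hbX] at h
        exact h
      rw [Finset.sum_congr rfl hone, Finset.sum_const, hSbcard X, if_pos rfl,
        nsmul_eq_mul, mul_one]
      omega
    · rw [if_neg hXY]
      -- count the zero rows
      have hc0 : ((Finset.univ.filter (fun b => βb b = Y)).filter
          (fun b => (∑ w ∈ Finset.univ.filter (fun w => βw w = X), B b w) = 0)).card ≤ 1 := by
        by_contra hgt
        push_neg at hgt
        obtain ⟨b1, hb1, b2, hb2, hne⟩ := Finset.one_lt_card.mp hgt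
        obtain ⟨hb1m, hb1z⟩ := Finset.mem_filter.mp hb1
        obtain ⟨hb2m, hb2z⟩ := Finset.mem_filter.mp hb2
        have hb1Y : βb b1 = Y := by simpa using hb1m
        have hb2Y : βb b2 = Y := by simpa using hb2m
        obtain ⟨bs, hbs⟩ := hbne X
        have hbs1 : bs ≠ b1 := by
          intro h
          rw [h, hb1Y] at hbs
          exact hXY hbs.symm
        have hbs2 : bs ≠ b2 := by
          intro h
          rw [h, hb2Y] at hbs
          exact hXY hbs.symm
        have h1 : B b1 (e bs) = 1 := by
          have hc := C1 bs b1
          rw [hbs, if_neg hbs1, hb1z] at hc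
          omega
        have h2 : B b2 (e bs) = 1 := by
          have hc := C1 bs b2
          rw [hbs, if_neg hbs2, hb2z] at hc
          omega
        have htb := hτbin (e bs) Y
        have h2le := two_le_sum' (Finset.univ.filter (fun b => βb b = Y))
          (fun b => B b (e bs))
          (fun a _ => by
            show (0:ℤ) ≤ B a (e bs)
            rcases hB a (e bs) with h | h <;> omega)
          b1 b2 (by simpa using hb1Y) (by simpa using hb2Y) hne
          (by show (1:ℤ) ≤ B b1 (e bs); omega) (by show (1:ℤ) ≤ B b2 (e bs); omega)
        have h2le' : (2:ℤ) ≤ ∑ b ∈ Finset.univ.filter (fun b => βb b = Y), B b (e bs) := h2le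
        omega
      have hsplit := Finset.sum_filter_add_sum_filter_not
        (Finset.univ.filter (fun b => βb b = Y))
        (fun b => (∑ w ∈ Finset.univ.filter (fun w => βw w = X), B b w) = 0)
        (fun b => ∑ w ∈ Finset.univ.filter (fun w => βw w = X), B b w)
      have hz : (∑ b ∈ (Finset.univ.filter (fun b => βb b = Y)).filter
          (fun b => (∑ w ∈ Finset.univ.filter (fun w => βw w = X), B b w) = 0),
          ∑ w ∈ Finset.univ.filter (fun w => βw w = X), B b w) = 0 :=
        Finset.sum_eq_zero (fun b hb => (Finset.mem_filter.mp hb).2)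
      have ho : (∑ b ∈ (Finset.univ.filter (fun b => βb b = Y)).filter
          (fun b => ¬ (∑ w ∈ Finset.univ.filter (fun w => βw w = X), B b w) = 0),
          ∑ w ∈ Finset.univ.filter (fun w => βw w = X), B b w)
          = ((Finset.univ.filter (fun b => βb b = Y)).filter
          (fun b => ¬ (∑ w ∈ Finset.univ.filter (fun w => βw w = X), B b w) = 0)).card := by
        rw [Finset.sum_congr rfl (fun b hb => ?_), Finset.sum_const, nsmul_eq_mul, mul_one]
        have hnz := (Finset.mem_filter.mp hb).2
        rcases hσbin b X with h | h
        · exact absurd h hnz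
        · exact h
      have hcards := Finset.card_filter_add_card_filter_not
        (s := Finset.univ.filter (fun b => βb b = Y))
        (p := fun b => (∑ w ∈ Finset.univ.filter (fun w => βw w = X), B b w) = 0)
      have hScard := hSbcard Y
      rw [← hsplit, hz, zero_add, ho]
      omega
  have hprod : A' * B'ᵀ = Matrix.of (fun _ _ => (1 : ℤ)) - 1 := by
    ext X Y
    rw [Matrix.mul_apply]
    simp only [Matrix.transpose_apply, Matrix.sub_apply, Matrix.of_apply, Matrix.one_apply,
      hB'def]
    -- (P)-identity for rows of A'
    have hP : ∀ Z : ι, A' X Z = (if Z = X then 1 else 0)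
        + ∑ b0 ∈ Finset.univ.filter (fun b => βb b = X),
          (if βw (e b0) = Z then (1 : ℤ) else 0) := by
      intro Z
      have hinjP : ∀ a1 ∈ Finset.univ.filter (fun b => βb b = X),
          ∀ a2 ∈ Finset.univ.filter (fun b => βb b = X),
          βw (e a1) = βw (e a2) → a1 = a2 := by
        intro a1 h1 a2 h2 heq
        by_contra hne
        exact T1 a1 a2 hne (by
          have g1 : βb a1 = X := by simpa using h1
          have g2 : βb a2 = X := by simpa using h2
          rw [g1, g2]) heq
      have hsum := sum_ind_eq_ite (Finset.univ.filter (fun b => βb b = X))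
        (fun b => βw (e b)) Z hinjP
      by_cases hZX : Z = X
      · have hz : (∑ b0 ∈ Finset.univ.filter (fun b => βb b = X),
            (if βw (e b0) = Z then (1 : ℤ) else 0)) = 0 := by
          apply Finset.sum_eq_zero
          intro b0 hb0
          have hb0X : βb b0 = X := by simpa using hb0
          rw [if_neg (by rw [hZX, ← hb0X]; exact heb b0)]
        rw [hz, hZX, hA'e X X, if_pos (Or.inl rfl), if_pos rfl]
        ring
      · rw [hsum, hA'e X Z, if_neg hZX]
        by_cases hE : ∃ b ∈ Finset.univ.filter (fun b => βb b = X), βw (e b) = Z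
        · rw [if_pos hE, if_pos (Or.inr hE)]
          ring
        · rw [if_neg hE, if_neg (by
            rintro (h | h)
            · exact hZX h.symm
            · exact hE h)]
          ring
    -- the key inner-sum identity
    have hR : ∀ w ∈ Finset.univ.filter (fun w => βw w = Y),
        (∑ b : V, A' X (βb b) * B b w)
        = ((r : ℤ) - 1) + (if βb (f w) = X then 1 else 0) := by
      intro w _
      have hpt : ∀ b : V, A' X (βb b) * B b w
          = (if βb b = X then B b w else 0)
            + ∑ b0 ∈ Finset.univ.filter (fun b => βb b = X),
              (if βw (e b0) = βb b then B b w else 0) := by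
        intro b
        rw [hP (βb b), add_mul, ite_mul, one_mul, zero_mul, Finset.sum_mul]
        congr 1
        exact Finset.sum_congr rfl (fun b0 _ => by rw [ite_mul, one_mul, zero_mul])
      rw [Finset.sum_congr rfl (fun b _ => hpt b), Finset.sum_add_distrib]
      have hfirst : (∑ b : V, if βb b = X then B b w else 0)
          = ∑ b ∈ Finset.univ.filter (fun b => βb b = X), B b w :=
        (Finset.sum_filter _ _).symm
      have hswap : (∑ b : V, ∑ b0 ∈ Finset.univ.filter (fun b => βb b = X),
            (if βw (e b0) = βb b then B b w else 0))
          = ∑ b0 ∈ Finset.univ.filter (fun b => βb b = X),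
            (∑ b : V, if βw (e b0) = βb b then B b w else 0) := Finset.sum_comm
      have hper : ∀ b0 ∈ Finset.univ.filter (fun b => βb b = X),
          (∑ b : V, if βw (e b0) = βb b then B b w else 0)
          = 1 + (if b0 = f w then 1 else 0) - B b0 w := by
        intro b0 _
        have heqf : (∑ b : V, if βw (e b0) = βb b then B b w else 0)
            = ∑ b ∈ Finset.univ.filter (fun b => βb b = βw (e b0)), B b w := by
          rw [Finset.sum_filter]
          exact Finset.sum_congr rfl (fun b _ => by
            by_cases h : βw (e b0) = βb b
            · rw [if_pos h, if_pos h.symm]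
            · rw [if_neg h, if_neg (fun hh => h hh.symm)])
        rw [heqf]
        have hc := C2 (e b0) w
        rw [hfe b0] at hc
        have hite : (if e b0 = w then (1 : ℤ) else 0) = (if b0 = f w then 1 else 0) := by
          by_cases h : e b0 = w
          · rw [if_pos h, if_pos ((hiff_ef b0 w).mp h)]
          · rw [if_neg h, if_neg (fun hh => h ((hiff_ef b0 w).mpr hh))]
        rw [← hite]
        linarith [hc]
      rw [hfirst, hswap, Finset.sum_congr rfl hper, Finset.sum_sub_distrib,
        Finset.sum_add_distrib, Finset.sum_const, hSbcard X, nsmul_eq_mul, mul_one]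
      have hIte : (∑ b0 ∈ Finset.univ.filter (fun b => βb b = X),
          if b0 = f w then (1 : ℤ) else 0) = if βb (f w) = X then 1 else 0 := by
        rw [Finset.sum_ite_eq' (Finset.univ.filter (fun b => βb b = X)) (f w) (fun _ => (1 : ℤ))]
        by_cases h : βb (f w) = X
        · rw [if_pos (by simpa using h), if_pos h]
        · rw [if_neg (by simpa using h), if_neg h]
      rw [hIte]
      have hcast : ((r - 1 : ℕ) : ℤ) = (r : ℤ) - 1 := by omega
      rw [hcast]
      ring
    -- split the product sum in three parts
    have hsplit : ∀ Z : ι, A' X Z * ((∑ b ∈ Finset.univ.filter (fun b => βb b = Z),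
          ∑ w ∈ Finset.univ.filter (fun w => βw w = Y), B b w) - ((r : ℤ) - 2)
          - (if Y = Z then 1 else 0))
        = A' X Z * (∑ b ∈ Finset.univ.filter (fun b => βb b = Z),
            ∑ w ∈ Finset.univ.filter (fun w => βw w = Y), B b w)
          - A' X Z * ((r : ℤ) - 2) - (if Y = Z then A' X Z else 0) := by
      intro Z
      rw [mul_sub, mul_sub, mul_ite, mul_one, mul_zero]
    rw [Finset.sum_congr rfl (fun Z _ => hsplit Z), Finset.sum_sub_distrib,
      Finset.sum_sub_distrib]
    have ht3 : (∑ Z : ι, if Y = Z then A' X Z else 0) = A' X Y := by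
      rw [Finset.sum_ite_eq Finset.univ Y (A' X)]
      simp
    have ht2 : (∑ Z : ι, A' X Z * ((r : ℤ) - 2)) = (r : ℤ) * ((r : ℤ) - 2) := by
      rw [← Finset.sum_mul, hrowA' X]
    have hQ : (∑ Z : ι, A' X Z * (∑ b ∈ Finset.univ.filter (fun b => βb b = Z),
          ∑ w ∈ Finset.univ.filter (fun w => βw w = Y), B b w))
        = ((r : ℤ) - 1) * ((r : ℤ) - 1) + A' X Y - (if X = Y then 1 else 0) := by
      have hfib : (∑ Z : ι, A' X Z * (∑ b ∈ Finset.univ.filter (fun b => βb b = Z),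
            ∑ w ∈ Finset.univ.filter (fun w => βw w = Y), B b w))
          = ∑ b : V, A' X (βb b) * (∑ w ∈ Finset.univ.filter (fun w => βw w = Y), B b w) := by
        rw [← Finset.sum_fiberwise Finset.univ βb
          (fun b => A' X (βb b) * (∑ w ∈ Finset.univ.filter (fun w => βw w = Y), B b w))]
        refine Finset.sum_congr rfl (fun Z _ => ?_)
        rw [Finset.mul_sum]
        refine Finset.sum_congr rfl (fun b hb => ?_)
        have hbZ : βb b = Z := by simpa using hb
        rw [hbZ]
      rw [hfib]
      have hswap2 : (∑ b : V, A' X (βb b)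
            * (∑ w ∈ Finset.univ.filter (fun w => βw w = Y), B b w))
          = ∑ w ∈ Finset.univ.filter (fun w => βw w = Y),
            (∑ b : V, A' X (βb b) * B b w) := by
        rw [Finset.sum_congr rfl
          (fun b _ => Finset.mul_sum (Finset.univ.filter (fun w => βw w = Y)) (B b) (A' X (βb b)))]
        exact Finset.sum_comm
      rw [hswap2, Finset.sum_congr rfl hR, Finset.sum_add_distrib, Finset.sum_const,
        hSwcard Y, nsmul_eq_mul]
      have hc : (∑ w ∈ Finset.univ.filter (fun w => βw w = Y),
          if βb (f w) = X then (1 : ℤ) else 0) = A' X Y - (if X = Y then 1 else 0) := by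
        by_cases hXY : X = Y
        · have hzz : (∑ w ∈ Finset.univ.filter (fun w => βw w = Y),
              if βb (f w) = X then (1 : ℤ) else 0) = 0 := by
            apply Finset.sum_eq_zero
            intro w hw
            have hwY : βw w = Y := by simpa using hw
            rw [if_neg (by rw [hXY, ← hwY]; exact hfw w)]
          rw [hzz, hA'e X Y, if_pos (Or.inl hXY), if_pos hXY]
          ring
        · have hinjc : ∀ a1 ∈ Finset.univ.filter (fun w => βw w = Y),
              ∀ a2 ∈ Finset.univ.filter (fun w => βw w = Y),
              βb (f a1) = βb (f a2) → a1 = a2 := by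
            intro a1 h1 a2 h2 heq
            by_contra hne
            exact T1' a1 a2 hne (by
              have g1 : βw a1 = Y := by simpa using h1
              have g2 : βw a2 = Y := by simpa using h2
              rw [g1, g2]) heq
          have hs := sum_ind_eq_ite (Finset.univ.filter (fun w => βw w = Y))
            (fun w => βb (f w)) X hinjc
          rw [hs, hA'f X Y, if_neg hXY]
          by_cases hE : ∃ w ∈ Finset.univ.filter (fun w => βw w = Y), βb (f w) = X
          · rw [if_pos hE, if_pos (Or.inr hE)]
            ring
          · rw [if_neg hE, if_neg (by
              rintro (h | h)
              · exact hXY h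
              · exact hE h)]
            ring
      rw [hc]
      have hcast : ((r - 1 : ℕ) : ℤ) = (r : ℤ) - 1 := by omega
      rw [hcast]
      ring
    rw [hQ, ht2, ht3]
    ring
  refine ⟨?_, hrowA', hcolA', B', hB'01, hprod⟩
  intro X Y
  rw [hA' X Y]
  by_cases h : X = Y ∨ ∃ b w, βb b = X ∧ βw w = Y ∧ A b w = 1
  · right; rw [if_pos h]
  · left; rw [if_neg h]
end

section
/- Let G be a cubic (3-regular) negative Lehman graph (k = -1) and let M be any perfect matching of G. Then the biclique expansion e(G,M), obtained by replacing each matching edge {b_i, w_i} by a copy of K_{2,2} and distributing the non-matching edges so that the result is 3-regular, is a cubic Lehman graph with k = 1. -/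
open Matrix BigOperators

private lemma exu_of_sum_one {α : Type*} [Fintype α] (f : α → ℤ)
    (h01 : ∀ a, f a = 0 ∨ f a = 1) (hsum : ∑ a, f a = 1) : ∃! a, f a = 1 := by
  classical
  have hnn : ∀ a ∈ Finset.univ, (0:ℤ) ≤ f a := by
    intro a _; rcases h01 a with h|h <;> omega
  have hex : ∃ a, f a = 1 := by
    by_contra h
    push_neg at h
    have hz : ∀ a ∈ Finset.univ, f a = 0 := by
      intro a _; rcases h01 a with h'|h'
      · exact h'
      · exact absurd h' (h a)
    rw [Finset.sum_eq_zero hz] at hsum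
    exact absurd hsum (by norm_num)
  obtain ⟨a, ha⟩ := hex
  refine ⟨a, ha, ?_⟩
  intro b hb
  by_contra hne
  have h2 : ∑ x ∈ ({b, a} : Finset α), f x = 2 := by
    rw [Finset.sum_pair hne, ha, hb]; norm_num
  have h3 := Finset.sum_le_sum_of_subset_of_nonneg (Finset.subset_univ ({b,a} : Finset α))
      (fun i _ _ => hnn i (Finset.mem_univ i))
  rw [h2, hsum] at h3
  omega

private lemma mul_comm_of_inv {n : Type*} [Fintype n] [DecidableEq n]
    (X Y C Ci : Matrix n n ℚ) (h : X * Y = C) (hC : C * Ci = 1) (hCi : Ci * C = 1)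
    (hcomm : X * C = C * X) : Y * X = C := by
  have h1 : X * (Y * Ci) = 1 := by rw [← Matrix.mul_assoc, h, hC]
  have h2 : (Y * Ci) * X = 1 := mul_eq_one_comm.mp h1
  have h3 : Ci * X * C = X := by
    calc Ci * X * C = Ci * (X * C) := by rw [Matrix.mul_assoc]
    _ = Ci * (C * X) := by rw [hcomm]
    _ = (Ci * C) * X := by rw [Matrix.mul_assoc]
    _ = X := by rw [hCi, Matrix.one_mul]
  calc Y * X = Y * (Ci * X * C) := by rw [h3]
  _ = ((Y * Ci) * X) * C := by rw [← Matrix.mul_assoc, ← Matrix.mul_assoc]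
  _ = C := by rw [h2, Matrix.one_mul]

private lemma Jab {V : Type*} [Fintype V] [DecidableEq V] (a b : ℚ)
    (h : a * b * (Fintype.card V : ℚ) - a - b = 0) :
    ((Matrix.of (fun _ _ : V => a)) - 1) * ((Matrix.of fun _ _ : V => b) - 1) = 1 := by
  ext x y
  simp only [Matrix.mul_apply, Matrix.sub_apply, Matrix.of_apply, Matrix.one_apply]
  have expand : ∀ z, (a - (if x = z then (1:ℚ) else 0)) * (b - if z = y then (1:ℚ) else 0)
      = a*b - (if x = z then b else 0) - (if z = y then a else 0)
        + (if x = z then (if z = y then (1:ℚ) else 0) else 0) := by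
    intro z; split_ifs <;> ring
  rw [Finset.sum_congr rfl (fun z _ => expand z)]
  rw [Finset.sum_add_distrib, Finset.sum_sub_distrib, Finset.sum_sub_distrib,
    Finset.sum_const, Finset.sum_ite_eq, Finset.sum_ite_eq', Finset.sum_ite_eq]
  simp only [Finset.mem_univ, if_true, Finset.card_univ, nsmul_eq_mul]
  split_ifs with hxy
  · rw [mul_comm ((Fintype.card V : ℚ)) (a*b)] at *; linarith
  · rw [mul_comm ((Fintype.card V : ℚ)) (a*b)] at *; linarith

private lemma fin2_pair_sum {V : Type*} [DecidableEq V] (z : V × Fin 2) (i : V) :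
    (∑ q : Fin 2, if (i, q) = z then (1:ℤ) else 0) = if z.1 = i then 1 else 0 := by
  obtain ⟨l, r⟩ := z
  simp only [Prod.mk.injEq]
  by_cases h : l = i
  · subst h
    simp
  · rw [if_neg h, Finset.sum_eq_zero]
    intro q _
    rw [if_neg]
    rintro ⟨h1, -⟩
    exact h h1.symm

/-- Biclique expansion of any perfect matching of a cubic negative Lehman graph
yields a cubic Lehman graph with k = 1. -/
theorem stmt10 {V W : Type*} [Fintype V] [Fintype W] [DecidableEq V] [DecidableEq W]
    (A : Matrix V W ℤ) (hA : is01 A)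
    (hrow : ∀ b, ∑ w, A b w = 3) (hcol : ∀ w, ∑ b, A b w = 3)
    (B : Matrix V W ℤ) (hB : is01 B)
    (hAB : A * Bᵀ = Matrix.of (fun _ _ => (1 : ℤ)) - 1)
    -- a perfect matching M = {bᵢ wᵢ}, encoded by a bijection
    (σ : V ≃ W) (hσ : ∀ i, A i (σ i) = 1)
    -- the biclique expansion e(G,M): each bᵢ becomes Bᵢ = {i} × Fin 2,
    -- each wᵢ becomes Wᵢ = {i} × Fin 2 (indexed via σ)
    (A' : Matrix (V × Fin 2) (V × Fin 2) ℤ) (hA'01 : is01 A')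
    (hbic : ∀ i (p q : Fin 2), A' (i, p) (i, q) = 1)
    (hout : ∀ i j, i ≠ j →
      ∑ p : Fin 2, ∑ q : Fin 2, A' (i, p) (j, q) = A i (σ j))
    (hrow' : ∀ x, ∑ y, A' x y = 3) (hcol' : ∀ y, ∑ x, A' x y = 3) :
    ∃ B' : Matrix (V × Fin 2) (V × Fin 2) ℤ, is01 B' ∧
      A' * B'ᵀ = Matrix.of (fun _ _ => (1 : ℤ)) + 1 := by
  classical
  by_cases hV : Nonempty V
  swap
  · refine ⟨0, fun i j => Or.inl rfl, ?_⟩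
    ext x y
    exact absurd ⟨x.1⟩ hV
  -- nonnegativity
  have hA0 : ∀ i j, 0 ≤ A i j := fun i j => by rcases hA i j with h|h <;> omega
  have hB0 : ∀ i j, 0 ≤ B i j := fun i j => by rcases hB i j with h|h <;> omega
  have hA'0 : ∀ x z, 0 ≤ A' x z := fun x z => by rcases hA'01 x z with h|h <;> omega
  -- cardinality
  have hcardW : 3 ≤ Fintype.card W := by
    obtain ⟨b⟩ := hV
    have h1 : (3:ℤ) ≤ (Fintype.card W : ℤ) := by
      calc (3:ℤ) = ∑ w, A b w := (hrow b).symm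
      _ ≤ ∑ _w : W, 1 := Finset.sum_le_sum (fun w _ => by rcases hA b w with h|h <;> omega)
      _ = (Fintype.card W : ℤ) := by simp
    exact_mod_cast h1
  have hcardV : Fintype.card V = Fintype.card W := Fintype.card_congr σ
  have hn3 : 3 ≤ Fintype.card V := hcardV ▸ hcardW
  have hnq : ((Fintype.card V : ℚ) - 1) ≠ 0 := by
    have : (3:ℚ) ≤ (Fintype.card V : ℚ) := by exact_mod_cast hn3
    linarith
  -- entrywise form of hAB
  have hABe : ∀ m m', ∑ w, A m w * B m' w = 1 - (if m = m' then 1 else 0) := by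
    intro m m'
    have h := congrFun (congrFun hAB m) m'
    simpa [Matrix.mul_apply, Matrix.sub_apply, Matrix.one_apply, Matrix.transpose_apply] using h
  -- B^T A = J - I (via σ-reindexed square matrices over ℚ)
  have hBA : ∀ l' l : V, ∑ m, B m (σ l') * A m (σ l) = 1 - (if l' = l then 1 else 0) := by
    set nq : ℚ := (Fintype.card V : ℚ) with hnqdef
    set X : Matrix V V ℚ := Matrix.of (fun m k => (A m (σ k) : ℚ)) with hX
    set Y : Matrix V V ℚ := Matrix.of (fun k m => (B m (σ k) : ℚ)) with hY
    set C : Matrix V V ℚ := Matrix.of (fun _ _ : V => (1:ℚ)) - 1 with hC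
    set Ci : Matrix V V ℚ := Matrix.of (fun _ _ : V => (nq - 1)⁻¹) - 1 with hCi
    have hXY : X * Y = C := by
      ext m m'
      simp only [hX, hY, hC, Matrix.mul_apply, Matrix.of_apply, Matrix.sub_apply,
        Matrix.one_apply]
      calc ∑ k, (A m (σ k) : ℚ) * (B m' (σ k) : ℚ)
          = ∑ w, (A m w : ℚ) * (B m' w : ℚ) := Equiv.sum_comp σ (fun w => (A m w : ℚ) * (B m' w : ℚ))
        _ = ((∑ w, A m w * B m' w : ℤ) : ℚ) := by push_cast; rfl
        _ = (((1 : ℤ) - if m = m' then (1:ℤ) else 0 : ℤ) : ℚ) := by rw [hABe m m']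
        _ = 1 - if m = m' then 1 else 0 := by split_ifs <;> norm_num
    have hXJ : X * Matrix.of (fun _ _ : V => (1:ℚ)) = Matrix.of (fun _ _ : V => (3:ℚ)) := by
      ext m k
      simp only [Matrix.mul_apply, Matrix.of_apply, mul_one, hX]
      calc ∑ k', (A m (σ k') : ℚ) = ∑ w, (A m w : ℚ) := Equiv.sum_comp σ (fun w => (A m w : ℚ))
        _ = ((∑ w, A m w : ℤ) : ℚ) := by push_cast; rfl
        _ = 3 := by rw [hrow m]; norm_num
    have hJX : Matrix.of (fun _ _ : V => (1:ℚ)) * X = Matrix.of (fun _ _ : V => (3:ℚ)) := by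
      ext m k
      simp only [Matrix.mul_apply, Matrix.of_apply, one_mul, hX]
      calc ∑ k', (A k' (σ k) : ℚ) = ((∑ k', A k' (σ k) : ℤ) : ℚ) := by push_cast; rfl
        _ = 3 := by rw [hcol (σ k)]; norm_num
    have hcomm : X * C = C * X := by
      rw [hC, Matrix.mul_sub, Matrix.sub_mul, Matrix.mul_one, Matrix.one_mul, hXJ, hJX]
    have hCCi : C * Ci = 1 := by
      rw [hC, hCi]
      apply Jab
      rw [← hnqdef]
      field_simp
      ring
    have hCiC : Ci * C = 1 := by
      rw [hC, hCi]
      apply Jab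
      rw [← hnqdef]
      field_simp
      ring
    have hYX := mul_comm_of_inv X Y C Ci hXY hCCi hCiC hcomm
    intro l' l
    have h := congrFun (congrFun hYX l') l
    simp only [hX, hY, hC, Matrix.mul_apply, Matrix.of_apply, Matrix.sub_apply,
      Matrix.one_apply] at h
    have h3 : ((∑ m, B m (σ l') * A m (σ l) : ℤ) : ℚ)
        = (((1 : ℤ) - if l' = l then (1:ℤ) else 0 : ℤ) : ℚ) := by
      push_cast
      rw [h]
    exact_mod_cast h3
  -- the permutation part of A'
  set P : Matrix (V × Fin 2) (V × Fin 2) ℤ :=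
    fun x z => if x.1 = z.1 then 0 else A' x z with hPdef
  have hP01 : ∀ x z, P x z = 0 ∨ P x z = 1 := by
    intro x z; by_cases h : x.1 = z.1 <;> simp [hPdef, h, hA'01 x z]
  have hP0 : ∀ x z, 0 ≤ P x z := fun x z => by rcases hP01 x z with h|h <;> omega
  have hblock : ∀ (x z : V × Fin 2), x.1 = z.1 → A' x z = 1 := by
    rintro ⟨i,p⟩ ⟨l,q⟩ h
    dsimp at h; subst h; exact hbic i p q
  have hsplit : ∀ x z, A' x z = (if x.1 = z.1 then 1 else 0) + P x z := by
    intro x z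
    by_cases h : x.1 = z.1
    · simp [hPdef, h, hblock x z h]
    · simp [hPdef, h]
  have hProw : ∀ x, ∑ z, P x z = 1 := by
    intro x
    have hblocksum : ∑ z : V × Fin 2, (if x.1 = z.1 then A' x z else 0) = 2 := by
      rw [Fintype.sum_prod_type]
      have hinner : ∀ l, ∑ r : Fin 2, (if x.1 = l then A' x (l, r) else 0)
          = if x.1 = l then A' x (l,0) + A' x (l,1) else 0 := by
        intro l; by_cases h : x.1 = l <;> simp [h, Fin.sum_univ_two]
      rw [Finset.sum_congr rfl (fun l _ => hinner l), Finset.sum_ite_eq]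
      simp only [Finset.mem_univ, if_true]
      rw [hblock x (x.1, 0) rfl, hblock x (x.1, 1) rfl]; norm_num
    have hdiff : ∑ z, P x z = ∑ z, A' x z - ∑ z, (if x.1 = z.1 then A' x z else 0) := by
      rw [← Finset.sum_sub_distrib]
      apply Finset.sum_congr rfl
      intro z _
      by_cases h : x.1 = z.1 <;> simp [hPdef, h]
    rw [hdiff, hrow' x, hblocksum]; norm_num
  have hPcol : ∀ z, ∑ x, P x z = 1 := by
    intro z
    have hblocksum : ∑ x : V × Fin 2, (if x.1 = z.1 then A' x z else 0) = 2 := by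
      rw [Fintype.sum_prod_type]
      have hinner : ∀ m, ∑ p : Fin 2, (if m = z.1 then A' (m, p) z else 0)
          = if m = z.1 then A' (m,0) z + A' (m,1) z else 0 := by
        intro m; by_cases h : m = z.1 <;> simp [h, Fin.sum_univ_two]
      rw [Finset.sum_congr rfl (fun m _ => hinner m), Finset.sum_ite_eq']
      simp only [Finset.mem_univ, if_true]
      rw [hblock (z.1, 0) z rfl, hblock (z.1, 1) z rfl]; norm_num
    have hdiff : ∑ x, P x z = ∑ x, A' x z - ∑ x, (if x.1 = z.1 then A' x z else 0) := by
      rw [← Finset.sum_sub_distrib]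
      apply Finset.sum_congr rfl
      intro x _
      by_cases h : x.1 = z.1 <;> simp [hPdef, h]
    rw [hdiff, hcol' z, hblocksum]; norm_num
  -- out function
  obtain ⟨ot, hot, huniq⟩ :
      ∃ ot : V × Fin 2 → V × Fin 2, (∀ x, P x (ot x) = 1) ∧
        (∀ x z, P x z = 1 → z = ot x) := by
    choose ot h1 h2 using fun x => exu_of_sum_one _ (hP01 x) (hProw x)
    exact ⟨ot, h1, h2⟩
  have hPe : ∀ x z, P x z = if z = ot x then 1 else 0 := by
    intro x z
    by_cases h : z = ot x
    · subst h; simp [hot x]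
    · rw [if_neg h]
      rcases hP01 x z with h0|h1
      · exact h0
      · exact absurd (huniq x z h1) h
  have hotne : ∀ x, (ot x).1 ≠ x.1 := by
    intro x h
    have h1 := hot x
    rw [hPdef] at h1
    simp only [h.symm, if_true] at h1
    exact absurd h1 (by norm_num)
  have hotinj : Function.Injective ot := by
    intro x u h
    obtain ⟨w, hw, hwu⟩ := exu_of_sum_one (fun v => P v (ot u))
      (fun v => hP01 v (ot u)) (hPcol (ot u))
    have hx : x = w := hwu x (by rw [← h]; exact hot x)
    have hu : u = w := hwu u (hot u)
    rw [hx, hu]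
  have hotbij : Function.Bijective ot := Finite.injective_iff_bijective.mp hotinj
  set e : (V × Fin 2) ≃ (V × Fin 2) := Equiv.ofBijective ot hotbij with hedef
  have he_app : ∀ u, e u = ot u := fun u => rfl
  have he_symm : ∀ u, e.symm (ot u) = u := by
    intro u; rw [← he_app]; exact e.symm_apply_apply u
  have he_ot_symm : ∀ z, ot (e.symm z) = z := by
    intro z; rw [← he_app]; exact e.apply_symm_apply z
  -- fact (e): A m (σ i) counts arcs
  have hAe : ∀ m i, A m (σ i)
      = (if m = i then 1 else 0) + ∑ p : Fin 2, (if (ot (m,p)).1 = i then (1:ℤ) else 0) := by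
    intro m i
    by_cases h : m = i
    · subst h
      have hz : ∀ p : Fin 2, (if (ot (m,p)).1 = m then (1:ℤ) else 0) = 0 := by
        intro p; exact if_neg (hotne (m,p))
      rw [Finset.sum_congr rfl (fun p _ => hz p), Finset.sum_const, hσ m]
      simp
    · have h2 : ∀ (p q : Fin 2), A' (m,p) (i,q) = P (m,p) (i,q) := by
        intro p q; rw [hPdef]; exact (if_neg h).symm
      calc A m (σ i) = ∑ p : Fin 2, ∑ q : Fin 2, A' (m,p) (i,q) := (hout m i h).symm
      _ = ∑ p : Fin 2, ∑ q : Fin 2, (if (i,q) = ot (m,p) then (1:ℤ) else 0) := by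
          refine Finset.sum_congr rfl (fun p _ => Finset.sum_congr rfl (fun q _ => ?_))
          rw [h2 p q, hPe]
      _ = ∑ p : Fin 2, (if (ot (m,p)).1 = i then (1:ℤ) else 0) :=
          Finset.sum_congr rfl (fun p _ => fin2_pair_sum (ot (m,p)) i)
      _ = (if m = i then 1 else 0) + ∑ p : Fin 2, (if (ot (m,p)).1 = i then (1:ℤ) else 0) := by
          rw [if_neg h, zero_add]
  -- diagonal vanishing
  have hNdiag : ∀ y : V × Fin 2, B y.1 (σ (ot y).1) = 0 := by
    intro y
    have hA1 : A y.1 (σ (ot y).1) = 1 := by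
      have he1 := hAe y.1 (ot y).1
      rw [if_neg (fun hc : y.1 = (ot y).1 => hotne y hc.symm), zero_add] at he1
      have hterm : (if (ot (y.1, y.2)).1 = (ot y).1 then (1:ℤ) else 0) = 1 := by
        rw [Prod.mk.eta, if_pos rfl]
      have hge : (1:ℤ) ≤ ∑ p : Fin 2, (if (ot (y.1,p)).1 = (ot y).1 then (1:ℤ) else 0) := by
        have := Finset.single_le_sum
          (f := fun p => if (ot (y.1,p)).1 = (ot y).1 then (1:ℤ) else 0)
          (fun p _ => by split_ifs <;> norm_num) (Finset.mem_univ y.2)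
        rw [hterm] at this
        exact this
      rcases hA y.1 (σ (ot y).1) with h0|h1
      · rw [h0] at he1; omega
      · exact h1
    have h0 := hABe y.1 y.1
    rw [if_pos rfl] at h0
    norm_num at h0
    have hz := (Finset.sum_eq_zero_iff_of_nonneg
      (fun w _ => mul_nonneg (hA0 y.1 w) (hB0 y.1 w))).mp h0 (σ (ot y).1) (Finset.mem_univ _)
    rw [hA1, one_mul] at hz
    exact hz
  -- construction of B'
  refine ⟨fun y z => P y z + B (e.symm z).1 (σ (ot y).1), ?_, ?_⟩
  · intro y z
    show P y z + B (e.symm z).1 (σ (ot y).1) = 0 ∨ P y z + B (e.symm z).1 (σ (ot y).1) = 1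
    by_cases h : z = ot y
    · subst h
      rw [hPe, if_pos rfl, he_symm y, hNdiag y]
      right; norm_num
    · rw [hPe, if_neg h, zero_add]
      exact hB _ _
  · ext x y
    rw [Matrix.mul_apply]
    simp only [Matrix.transpose_apply, Matrix.add_apply, Matrix.of_apply, Matrix.one_apply]
    show (∑ z, A' x z * (P y z + B (e.symm z).1 (σ (ot y).1))) = 1 + if x = y then 1 else 0
    have hsum1 : ∑ z, A' x z * P y z = A' x (ot y) := by
      have hz : ∀ z : V × Fin 2, A' x z * P y z = if z = ot y then A' x z else 0 := by
        intro z; rw [hPe y z, mul_ite, mul_one, mul_zero]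
      rw [Finset.sum_congr rfl (fun z _ => hz z),
        Finset.sum_ite_eq' Finset.univ (ot y) (A' x)]
      simp only [Finset.mem_univ, if_true]
    have hA'ot : ∀ u, A' x (ot u)
        = (if (ot u).1 = x.1 then 1 else 0) + (if u = x then (1:ℤ) else 0) := by
      intro u
      rw [hsplit x (ot u), hPe x (ot u)]
      congr 1
      · exact if_congr eq_comm rfl rfl
      · exact if_congr ⟨fun hh => hotinj hh, fun hh => by rw [hh]⟩ rfl rfl
    have hsum2 : ∑ z, A' x z * B (e.symm z).1 (σ (ot y).1)
        = ∑ u, A' x (ot u) * B u.1 (σ (ot y).1) := by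
      rw [← Equiv.sum_comp e (fun z => A' x z * B (e.symm z).1 (σ (ot y).1))]
      refine Finset.sum_congr rfl (fun u _ => ?_)
      simp only [Equiv.symm_apply_apply, he_app, he_symm]
    have hsum3 : ∑ u : V × Fin 2, (if (ot u).1 = x.1 then (1:ℤ) else 0) * B u.1 (σ (ot y).1)
        = 1 - (if (ot y).1 = x.1 then 1 else 0) - B x.1 (σ (ot y).1) := by
      have hstep : ∑ u : V × Fin 2, (if (ot u).1 = x.1 then (1:ℤ) else 0) * B u.1 (σ (ot y).1)
          = ∑ m, (∑ p : Fin 2, if (ot (m,p)).1 = x.1 then (1:ℤ) else 0) * B m (σ (ot y).1) := by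
        rw [Fintype.sum_prod_type]
        refine Finset.sum_congr rfl (fun m _ => ?_)
        show (∑ p : Fin 2, (if (ot (m,p)).1 = x.1 then (1:ℤ) else 0) * B m (σ (ot y).1)) = _
        rw [← Finset.sum_mul]
      rw [hstep]
      have hstep2 : ∀ m, (∑ p : Fin 2, if (ot (m,p)).1 = x.1 then (1:ℤ) else 0) * B m (σ (ot y).1)
          = B m (σ (ot y).1) * A m (σ x.1) - (if m = x.1 then B m (σ (ot y).1) else 0) := by
        intro m
        have h2 : (∑ p : Fin 2, if (ot (m,p)).1 = x.1 then (1:ℤ) else 0)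
            = A m (σ x.1) - (if m = x.1 then 1 else 0) := by
          rw [hAe m x.1]; ring
        rw [h2]
        split_ifs <;> ring
      rw [Finset.sum_congr rfl (fun m _ => hstep2 m), Finset.sum_sub_distrib,
        hBA (ot y).1 x.1, Finset.sum_ite_eq' Finset.univ x.1 (fun m => B m (σ (ot y).1))]
      simp only [Finset.mem_univ, if_true]
    have hmul : ∀ z, A' x z * (P y z + B (e.symm z).1 (σ (ot y).1))
        = A' x z * P y z + A' x z * B (e.symm z).1 (σ (ot y).1) := fun z => by ring
    rw [Finset.sum_congr rfl (fun z _ => hmul z), Finset.sum_add_distrib, hsum1, hsum2]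
    have hsum2' : ∑ u, A' x (ot u) * B u.1 (σ (ot y).1)
        = (1 - (if (ot y).1 = x.1 then 1 else 0) - B x.1 (σ (ot y).1)) + B x.1 (σ (ot y).1) := by
      rw [← hsum3]
      have hu : ∀ u : V × Fin 2, A' x (ot u) * B u.1 (σ (ot y).1)
          = (if (ot u).1 = x.1 then (1:ℤ) else 0) * B u.1 (σ (ot y).1)
            + (if u = x then B u.1 (σ (ot y).1) else 0) := by
        intro u; rw [hA'ot u]; split_ifs <;> ring
      rw [Finset.sum_congr rfl (fun u _ => hu u), Finset.sum_add_distrib,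
        Finset.sum_ite_eq' Finset.univ x (fun u => B u.1 (σ (ot y).1))]
      simp only [Finset.mem_univ, if_true]
    rw [hsum2', hA'ot y]
    have hxy : (if y = x then (1:ℤ) else 0) = (if x = y then 1 else 0) := if_congr eq_comm rfl rfl
    rw [hxy]
    ring
end

section
/- Let G be a cubic Lehman graph with k = 1, and let R be the perfect matching of rungs of G (the edges not appearing in the Hadamard product A∘B). Then the biclique expansion e(G,R) is a cubic negative Lehman graph (k = -1). -/
open Matrix BigOperators

private lemma sum01_one {α : Type*} [DecidableEq α] (s : Finset α) (f : α → ℤ)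
    (h01 : ∀ a ∈ s, f a = 0 ∨ f a = 1) (hsum : ∑ a ∈ s, f a = 1) :
    ∃! a, a ∈ s ∧ f a = 1 := by
  have hex : ∃ a ∈ s, f a = 1 := by
    by_contra h
    push_neg at h
    have h0 : ∑ a ∈ s, f a = 0 := Finset.sum_eq_zero (fun a ha => by
      rcases h01 a ha with h0 | h1
      · exact h0
      · exact absurd h1 (h a ha))
    omega
  obtain ⟨a, ha, hfa⟩ := hex
  refine ⟨a, ⟨ha, hfa⟩, ?_⟩
  rintro b ⟨hb, hfb⟩
  by_contra hne
  have hsub : ({b, a} : Finset α) ⊆ s := by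
    intro x hx
    simp only [Finset.mem_insert, Finset.mem_singleton] at hx
    rcases hx with rfl | rfl <;> assumption
  have hle := Finset.sum_le_sum_of_subset_of_nonneg (f := f) hsub (fun x hx _ => by
    rcases h01 x hx with h0 | h1
    · rw [h0]
    · rw [h1]; norm_num)
  rw [Finset.sum_pair hne, hfa, hfb] at hle
  omega

/-- Biclique expansion of the perfect matching of rungs of a cubic Lehman graph with
k = 1 yields a cubic negative Lehman graph (k = -1). -/
theorem stmt11 {V W : Type*} [Fintype V] [Fintype W] [DecidableEq V] [DecidableEq W]
    (A : Matrix V W ℤ) (hA : is01 A)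
    (hrow : ∀ b, ∑ w, A b w = 3) (hcol : ∀ w, ∑ b, A b w = 3)
    (B : Matrix V W ℤ) (hB : is01 B)
    (hAB : A * Bᵀ = Matrix.of (fun _ _ => (1 : ℤ)) + 1)
    -- the perfect matching of rungs: edges of G not in the auxiliary graph A∘B
    (σ : V ≃ W) (hσ : ∀ i, A i (σ i) = 1 ∧ B i (σ i) = 0)
    -- the biclique expansion e(G,R)
    (A' : Matrix (V × Fin 2) (V × Fin 2) ℤ) (hA'01 : is01 A')
    (hbic : ∀ i (p q : Fin 2), A' (i, p) (i, q) = 1)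
    (hout : ∀ i j, i ≠ j →
      ∑ p : Fin 2, ∑ q : Fin 2, A' (i, p) (j, q) = A i (σ j))
    (hrow' : ∀ x, ∑ y, A' x y = 3) (hcol' : ∀ y, ∑ x, A' x y = 3) :
    ∃ B' : Matrix (V × Fin 2) (V × Fin 2) ℤ, is01 B' ∧
      A' * B'ᵀ = Matrix.of (fun _ _ => (1 : ℤ)) - 1 := by
  classical
  -- entrywise form of A * Bᵀ = J + I
  have hAB' : ∀ i j, ∑ w, A i w * B j w = 1 + (if i = j then 1 else 0) := by
    intro i j
    have h := congrFun (congrFun hAB i) j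
    simpa [Matrix.mul_apply, Matrix.transpose_apply, Matrix.one_apply, Matrix.add_apply] using h
  ------------------------------------------------------------------
  -- Step A : the "transposed" Lehman identity  Bᵀ A = J + I
  ------------------------------------------------------------------
  have key : ∀ a b : V, ∑ k, B k (σ a) * A k (σ b) = 1 + (if a = b then 1 else 0) := by
    set n : ℕ := Fintype.card V with hn
    set AQ : Matrix V V ℚ := Matrix.of (fun i j => (A i (σ j) : ℚ)) with hAQ
    set BQ : Matrix V V ℚ := Matrix.of (fun i j => (B i (σ j) : ℚ)) with hBQ
    set JQ : Matrix V V ℚ := Matrix.of (fun _ _ => (1:ℚ)) with hJQ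
    have hABQ : AQ * BQᵀ = JQ + 1 := by
      ext i j
      have h1 : ∑ k, (A i (σ k) : ℚ) * (B j (σ k) : ℚ) = ((∑ w, A i w * B j w : ℤ) : ℚ) := by
        push_cast
        exact Equiv.sum_comp σ (fun w => (A i w : ℚ) * (B j w : ℚ))
      simp only [Matrix.mul_apply, Matrix.transpose_apply, hAQ, hBQ, hJQ, Matrix.of_apply,
        Matrix.add_apply, Matrix.one_apply]
      rw [h1, hAB' i j]
      push_cast
      split_ifs <;> norm_num
    have hAJ : AQ * JQ = (3:ℚ) • JQ := by
      ext i j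
      simp only [Matrix.mul_apply, hAQ, hJQ, Matrix.of_apply, Matrix.smul_apply, smul_eq_mul,
        mul_one]
      have h1 : ∑ k, (A i (σ k) : ℚ) = ((∑ w, A i w : ℤ) : ℚ) := by
        push_cast
        exact Equiv.sum_comp σ (fun w => (A i w : ℚ))
      rw [h1, hrow i]; norm_num
    have hJA : JQ * AQ = (3:ℚ) • JQ := by
      ext i j
      simp only [Matrix.mul_apply, hAQ, hJQ, Matrix.of_apply, Matrix.smul_apply, smul_eq_mul,
        mul_one, one_mul]
      have h1 : ∑ k, (A k (σ j) : ℚ) = ((∑ b, A b (σ j) : ℤ) : ℚ) := by push_cast; rfl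
      rw [h1, hcol (σ j)]; norm_num
    have hJJ : JQ * JQ = (n:ℚ) • JQ := by
      ext i j
      simp [hJQ, Matrix.mul_apply, hn, Finset.card_univ]
    set c : ℚ := ((n:ℚ)+1)⁻¹ with hc
    have hnz : ((n:ℚ)+1) ≠ 0 := by positivity
    set X : Matrix V V ℚ := BQᵀ * (1 - c • JQ) with hX
    have hXr : AQ * X = 1 := by
      rw [hX, ← Matrix.mul_assoc, hABQ]
      rw [Matrix.mul_sub, Matrix.mul_one, Matrix.mul_smul, Matrix.add_mul, hJJ]
      rw [Matrix.one_mul]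
      have h1 : c * (n:ℚ) + c = 1 := by
        rw [hc]; field_simp
      rw [smul_add, smul_smul, ← add_smul, h1, one_smul]
      abel
    have := invertibleOfRightInverse AQ X hXr
    have hBA : BQᵀ * AQ = JQ + 1 := by
      have h1 : BQᵀ = ⅟AQ * (JQ + 1) := by
        rw [← hABQ, ← Matrix.mul_assoc, invOf_mul_self, Matrix.one_mul]
      have h2 : ⅟AQ * JQ = (3:ℚ)⁻¹ • JQ := by
        have h3 : ⅟AQ * (AQ * JQ) = JQ := by
          rw [← Matrix.mul_assoc, invOf_mul_self, Matrix.one_mul]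
        rw [hAJ, mul_smul_comm] at h3
        calc ⅟AQ * JQ = (3:ℚ)⁻¹ • ((3:ℚ) • (⅟AQ * JQ)) := by rw [smul_smul]; norm_num
        _ = (3:ℚ)⁻¹ • JQ := by rw [h3]
      rw [h1, Matrix.mul_assoc, Matrix.add_mul, Matrix.one_mul, hJA, Matrix.mul_add,
        mul_smul_comm, h2, invOf_mul_self, smul_smul]
      norm_num
    intro a b
    have h := congrFun (congrFun hBA a) b
    simp only [Matrix.mul_apply, Matrix.transpose_apply, hAQ, hBQ, hJQ, Matrix.of_apply,
      Matrix.add_apply, Matrix.one_apply] at h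
    have h2 : ((∑ k, B k (σ a) * A k (σ b) : ℤ) : ℚ) = ((1 + if a = b then 1 else 0 : ℤ) : ℚ) := by
      push_cast
      rw [h]
    exact_mod_cast h2
  ------------------------------------------------------------------
  -- Step B : structure of A' : each row has a unique entry outside its block
  ------------------------------------------------------------------
  have hsum_out : ∀ x : V × Fin 2,
      ∑ y ∈ Finset.univ.filter (fun y : V × Fin 2 => y.1 ≠ x.1), A' x y = 1 := by
    intro x
    have hsplit := Finset.sum_filter_add_sum_filter_not Finset.univ
      (fun y : V × Fin 2 => y.1 = x.1) (fun y => A' x y)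
    have hblk : ∑ y ∈ Finset.univ.filter (fun y : V × Fin 2 => y.1 = x.1), A' x y = 2 := by
      rw [Finset.sum_filter, Fintype.sum_prod_type, Finset.sum_comm]
      have h1 : ∀ r : Fin 2, (∑ l, if l = x.1 then A' x (l, r) else 0) = 1 := by
        intro r
        rw [Finset.sum_ite_eq' Finset.univ x.1 (fun l => A' x (l, r))]
        simp [hbic x.1 x.2 r]
      rw [Finset.sum_congr rfl (fun r _ => h1 r)]
      simp
    have h3 := hrow' x
    rw [← hsplit, hblk] at h3
    have h4 : ∑ y ∈ Finset.univ.filter (fun y : V × Fin 2 => ¬ y.1 = x.1), A' x y = 1 := by omega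
    simpa [ne_eq] using h4
  have hexu : ∀ x : V × Fin 2, ∃! y : V × Fin 2,
      (y ∈ Finset.univ.filter (fun y : V × Fin 2 => y.1 ≠ x.1)) ∧ A' x y = 1 :=
    fun x => sum01_one _ _ (fun a _ => hA'01 x a) (hsum_out x)
  choose π₀ hπ₀ using fun x => (hexu x).exists
  have hπblk : ∀ x, (π₀ x).1 ≠ x.1 := fun x => by
    have := (hπ₀ x).1; simpa using this
  have hπone : ∀ x, A' x (π₀ x) = 1 := fun x => (hπ₀ x).2
  have hπuniq : ∀ x y, y.1 ≠ x.1 → A' x y = 1 → y = π₀ x := by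
    intro x y h1 h2
    exact (hexu x).unique ⟨by simpa using h1, h2⟩ ⟨by simpa using hπblk x, hπone x⟩
  -- decomposition of A'
  have hdec : ∀ x z : V × Fin 2,
      A' x z = (if z.1 = x.1 then 1 else 0) + (if z = π₀ x then 1 else 0) := by
    intro x z
    by_cases h1 : z.1 = x.1
    · have hz : z ≠ π₀ x := by
        intro h; exact hπblk x (by rw [← h]; exact h1)
      rw [if_pos h1, if_neg hz]
      obtain ⟨i, p⟩ := x
      obtain ⟨l, r⟩ := z
      simp only at h1
      subst h1
      rw [hbic]; norm_num
    · rw [if_neg h1]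
      by_cases h2 : z = π₀ x
      · subst h2; rw [if_pos rfl, hπone]; norm_num
      · rw [if_neg h2]
        rcases hA'01 x z with h3 | h3
        · simpa using h3
        · exact absurd (hπuniq x z h1 h3) h2
  -- injectivity of π₀, via column sums
  have hsum_in : ∀ y : V × Fin 2,
      ∑ x ∈ Finset.univ.filter (fun x : V × Fin 2 => x.1 ≠ y.1), A' x y = 1 := by
    intro y
    have hsplit := Finset.sum_filter_add_sum_filter_not Finset.univ
      (fun x : V × Fin 2 => x.1 = y.1) (fun x => A' x y)
    have hblk : ∑ x ∈ Finset.univ.filter (fun x : V × Fin 2 => x.1 = y.1), A' x y = 2 := by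
      rw [Finset.sum_filter, Fintype.sum_prod_type, Finset.sum_comm]
      have h1 : ∀ p : Fin 2, (∑ l, if l = y.1 then A' (l, p) y else 0) = 1 := by
        intro p
        rw [Finset.sum_ite_eq' Finset.univ y.1 (fun l => A' (l, p) y)]
        simp [hbic y.1 p y.2]
      rw [Finset.sum_congr rfl (fun p _ => h1 p)]
      simp
    have h3 := hcol' y
    rw [← hsplit, hblk] at h3
    have h4 : ∑ x ∈ Finset.univ.filter (fun x : V × Fin 2 => ¬ x.1 = y.1), A' x y = 1 := by omega
    simpa [ne_eq] using h4
  have hπinj : Function.Injective π₀ := by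
    intro x1 x2 h
    have hu := (sum01_one _ _ (fun a _ => hA'01 a (π₀ x1)) (hsum_in (π₀ x1))).unique
      (y₁ := x1) (y₂ := x2)
    apply hu
    · refine ⟨?_, hπone x1⟩
      simp only [Finset.mem_filter, Finset.mem_univ, true_and, ne_eq]
      exact fun h' => hπblk x1 h'.symm
    · refine ⟨?_, by rw [h]; exact hπone x2⟩
      simp only [Finset.mem_filter, Finset.mem_univ, true_and, ne_eq, h]
      exact fun h' => hπblk x2 h'.symm
  let π : (V × Fin 2) ≃ (V × Fin 2) := Equiv.ofBijective π₀ (Finite.injective_iff_bijective.mp hπinj)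
  have hπapp : ∀ x, π x = π₀ x := fun x => rfl
  ------------------------------------------------------------------
  -- Step C : counting
  ------------------------------------------------------------------
  -- a little Fin 2 sum computation
  have hq : ∀ (w : V × Fin 2) (i : V),
      (∑ q : Fin 2, if (i, q) = w then (1:ℤ) else 0) = if w.1 = i then 1 else 0 := by
    intro w i
    obtain ⟨m, r⟩ := w
    by_cases him : m = i
    · subst him
      simp [Prod.ext_iff]
    · have h0 : ∀ q : Fin 2, ¬ ((i, q) = (m, r)) := by
        intro q h
        exact him (congrArg Prod.fst h).symm
      simp only [h0, if_false, Finset.sum_const_zero]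
      rw [if_neg him]
  have hcnt : ∀ (b i : V), b ≠ i →
      (∑ p : Fin 2, if (π₀ (b,p)).1 = i then (1:ℤ) else 0) = A b (σ i) := by
    intro b i hbi
    have h := hout b i hbi
    rw [← h]
    refine Finset.sum_congr rfl (fun p _ => ?_)
    have h2 : ∀ q : Fin 2, A' (b, p) (i, q) = if (i, q) = π₀ (b, p) then 1 else 0 := by
      intro q
      rw [hdec (b,p) (i,q)]
      rw [if_neg (show ¬((i,q).1 = (b,p).1) from fun h => hbi h.symm), zero_add]
    rw [Finset.sum_congr rfl (fun q _ => h2 q), hq (π₀ (b,p)) i]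
  ------------------------------------------------------------------
  -- Step D : block sums of a function composed with π.symm
  ------------------------------------------------------------------
  have hDlem : ∀ (i : V) (f : V → ℤ),
      (∑ r : Fin 2, f ((π.symm (i, r)).1)) = (∑ b, A b (σ i) * f b) - f i := by
    intro i f
    have h1 : (∑ r : Fin 2, f ((π.symm (i, r)).1))
        = ∑ y : V × Fin 2, (if y.1 = i then f ((π.symm y).1) else 0) := by
      rw [Fintype.sum_prod_type, Finset.sum_comm]
      have h2 : ∀ r : Fin 2, (∑ l, if l = i then f ((π.symm (l, r)).1) else 0)
          = f ((π.symm (i, r)).1) := by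
        intro r
        rw [Finset.sum_ite_eq' Finset.univ i (fun l => f ((π.symm (l, r)).1))]
        simp
      rw [Finset.sum_congr rfl (fun r _ => h2 r)]
    have h3 : ∑ y : V × Fin 2, (if y.1 = i then f ((π.symm y).1) else 0)
        = ∑ z : V × Fin 2, (if (π₀ z).1 = i then f z.1 else 0) := by
      rw [← Equiv.sum_comp π (fun y => if y.1 = i then f ((π.symm y).1) else 0)]
      refine Finset.sum_congr rfl (fun z _ => ?_)
      rw [Equiv.symm_apply_apply, hπapp]
    have h4 : ∑ z : V × Fin 2, (if (π₀ z).1 = i then f z.1 else 0)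
        = ∑ b, ((∑ p : Fin 2, if (π₀ (b,p)).1 = i then (1:ℤ) else 0) * f b) := by
      rw [Fintype.sum_prod_type]
      refine Finset.sum_congr rfl (fun b _ => ?_)
      rw [Finset.sum_mul]
      refine Finset.sum_congr rfl (fun p _ => ?_)
      split_ifs <;> ring
    have h5 : ∀ b, ((∑ p : Fin 2, if (π₀ (b,p)).1 = i then (1:ℤ) else 0) * f b)
        = A b (σ i) * f b - (if b = i then f b else 0) := by
      intro b
      by_cases hbi : b = i
      · subst hbi
        have hz : (∑ p : Fin 2, if (π₀ (b,p)).1 = b then (1:ℤ) else 0) = 0 := by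
          refine Finset.sum_eq_zero (fun p _ => ?_)
          rw [if_neg (hπblk (b,p))]
        rw [hz, if_pos rfl, (hσ b).1]
        ring
      · rw [hcnt b i hbi, if_neg hbi]
        ring
    rw [h1, h3, h4, Finset.sum_congr rfl (fun b _ => h5 b), Finset.sum_sub_distrib,
      Finset.sum_ite_eq' Finset.univ i f]
    simp
  ------------------------------------------------------------------
  -- Step E : B y.1 (σ (π₀ y).1) = 1
  ------------------------------------------------------------------
  have hBjm : ∀ y : V × Fin 2, B y.1 (σ (π₀ y).1) = 1 := by
    intro y
    obtain ⟨j, q⟩ := y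
    have hmj : (π₀ (j,q)).1 ≠ j := hπblk (j,q)
    -- A j (σ m) = 1
    have hAjm : A j (σ (π₀ (j,q)).1) = 1 := by
      have h := hcnt j (π₀ (j,q)).1 (fun h' => hmj h'.symm)
      have h1 : (1:ℤ) ≤ ∑ p : Fin 2, (if (π₀ (j,p)).1 = (π₀ (j,q)).1 then (1:ℤ) else 0) := by
        have h2 := Finset.single_le_sum
          (f := fun p : Fin 2 => if (π₀ (j,p)).1 = (π₀ (j,q)).1 then (1:ℤ) else 0)
          (fun p _ => by split <;> norm_num) (Finset.mem_univ q)
        simpa using h2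
      rw [h] at h1
      rcases hA j (σ (π₀ (j,q)).1) with h0 | h0 <;> omega
    -- the diagonal entry of A Bᵀ
    have hdiag : ∑ w, A j w * B j w = 2 := by
      have := hAB' j j
      simpa using this
    have hsum0 : ∑ w, A j w * (1 - B j w) = 1 := by
      have h1 : ∑ w, A j w * (1 - B j w) = (∑ w, A j w) - ∑ w, A j w * B j w := by
        rw [← Finset.sum_sub_distrib]
        exact Finset.sum_congr rfl (fun w _ => by ring)
      rw [h1, hrow j, hdiag]
      norm_num
    have hrest : ∑ w ∈ Finset.univ.erase (σ j), A j w * (1 - B j w) = 0 := by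
      have h1 : A j (σ j) * (1 - B j (σ j))
          + ∑ w ∈ Finset.univ.erase (σ j), A j w * (1 - B j w)
          = ∑ w, A j w * (1 - B j w) := Finset.add_sum_erase Finset.univ
        (fun w => A j w * (1 - B j w)) (Finset.mem_univ (σ j))
      rw [(hσ j).1, (hσ j).2, hsum0] at h1
      linarith
    have hnonneg : ∀ w ∈ Finset.univ.erase (σ j), 0 ≤ A j w * (1 - B j w) := by
      intro w _
      rcases hA j w with h0 | h0 <;> rcases hB j w with h1 | h1 <;> rw [h0, h1] <;> norm_num
    have hzero := (Finset.sum_eq_zero_iff_of_nonneg hnonneg).mp hrest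
    have hmem : σ (π₀ (j,q)).1 ∈ Finset.univ.erase (σ j) := by
      simp only [Finset.mem_erase, Finset.mem_univ, and_true]
      exact fun h' => hmj (σ.injective h')
    have h2 := hzero _ hmem
    rw [hAjm, one_mul] at h2
    show B j (σ (π₀ (j,q)).1) = 1
    omega
  ------------------------------------------------------------------
  -- Step F : the matrix B' and its 0/1-ness
  ------------------------------------------------------------------
  refine ⟨Matrix.of (fun y w => B (π.symm w).1 (σ (π₀ y).1) - if w = π₀ y then 1 else 0),
    ?_, ?_⟩
  · intro y w
    simp only [Matrix.of_apply]
    by_cases hw : w = π₀ y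
    · subst hw
      have h1 : π.symm (π₀ y) = y := by
        rw [← hπapp, Equiv.symm_apply_apply]
      rw [if_pos rfl, h1, hBjm y]
      left; ring
    · rw [if_neg hw, sub_zero]
      exact hB _ _
  ------------------------------------------------------------------
  -- Step G : the product identity
  ------------------------------------------------------------------
  · ext x y
    rw [Matrix.mul_apply]
    have hterm : ∀ z : V × Fin 2, A' x z * (Matrix.of (fun y w =>
        B (π.symm w).1 (σ (π₀ y).1) - if w = π₀ y then 1 else 0))ᵀ z y
        = (if z.1 = x.1 then 1 else 0) *
            (B (π.symm z).1 (σ (π₀ y).1) - if z = π₀ y then 1 else 0)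
          + (if z = π₀ x then 1 else 0) *
            (B (π.symm z).1 (σ (π₀ y).1) - if z = π₀ y then 1 else 0) := by
      intro z
      rw [Matrix.transpose_apply, Matrix.of_apply, hdec x z]
      ring
    rw [Finset.sum_congr rfl (fun z _ => hterm z), Finset.sum_add_distrib]
    -- second part
    have hS2 : ∑ z : V × Fin 2, (if z = π₀ x then (1:ℤ) else 0) *
        (B (π.symm z).1 (σ (π₀ y).1) - if z = π₀ y then 1 else 0)
        = B x.1 (σ (π₀ y).1) - (if x = y then 1 else 0) := by
      have h1 : ∀ z : V × Fin 2, (if z = π₀ x then (1:ℤ) else 0) *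
          (B (π.symm z).1 (σ (π₀ y).1) - if z = π₀ y then 1 else 0)
          = if z = π₀ x then (B (π.symm z).1 (σ (π₀ y).1) - if z = π₀ y then 1 else 0) else 0 := by
        intro z; split_ifs <;> ring
      rw [Finset.sum_congr rfl (fun z _ => h1 z),
        Finset.sum_ite_eq' Finset.univ (π₀ x)
          (fun z => B (π.symm z).1 (σ (π₀ y).1) - if z = π₀ y then 1 else 0)]
      have h2 : π.symm (π₀ x) = x := by rw [← hπapp, Equiv.symm_apply_apply]
      have h3 : (π₀ x = π₀ y) = (x = y) := by
        apply propext
        exact ⟨fun h => hπinj h, fun h => by rw [h]⟩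
      simp only [Finset.mem_univ, if_true, h2, h3]
    -- first part
    have hS1 : ∑ z : V × Fin 2, (if z.1 = x.1 then (1:ℤ) else 0) *
        (B (π.symm z).1 (σ (π₀ y).1) - if z = π₀ y then 1 else 0)
        = ∑ r : Fin 2, (B (π.symm (x.1, r)).1 (σ (π₀ y).1)
            - if (x.1, r) = π₀ y then 1 else 0) := by
      rw [Fintype.sum_prod_type, Finset.sum_comm]
      refine Finset.sum_congr rfl (fun r _ => ?_)
      have h1 : ∀ l, (if (l, r).1 = x.1 then (1:ℤ) else 0) *
          (B (π.symm (l, r)).1 (σ (π₀ y).1) - if (l, r) = π₀ y then 1 else 0)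
          = if l = x.1 then (B (π.symm (l, r)).1 (σ (π₀ y).1)
              - if (l, r) = π₀ y then 1 else 0) else 0 := by
        intro l; split_ifs <;> ring
      rw [Finset.sum_congr rfl (fun l _ => h1 l),
        Finset.sum_ite_eq' Finset.univ x.1 (fun l => B (π.symm (l, r)).1 (σ (π₀ y).1)
          - if (l, r) = π₀ y then 1 else 0)]
      simp
    rw [hS1, hS2]
    have hS1a : ∑ r : Fin 2, (B (π.symm (x.1, r)).1 (σ (π₀ y).1)
        - if (x.1, r) = π₀ y then 1 else 0)
        = ((∑ b, A b (σ x.1) * B b (σ (π₀ y).1)) - B x.1 (σ (π₀ y).1))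
          - (if (π₀ y).1 = x.1 then 1 else 0) := by
      rw [Finset.sum_sub_distrib, hDlem x.1 (fun b => B b (σ (π₀ y).1)), hq (π₀ y) x.1]
    rw [hS1a]
    have hkey : ∑ b, A b (σ x.1) * B b (σ (π₀ y).1) = 1 + (if (π₀ y).1 = x.1 then 1 else 0) := by
      have h1 := key (π₀ y).1 x.1
      rw [← h1]
      exact Finset.sum_congr rfl (fun b _ => by ring)
    rw [hkey]
    simp only [Matrix.sub_apply, Matrix.of_apply, Matrix.one_apply]
    by_cases hxy : x = y <;> simp [hxy] <;> ring
end

section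
/- Suppose G is a Lehman graph of type (n,3,s) with k = 3s - n ∈ {1,-1}, where s > 2 if k = 1 and s > 1 if k = -1. If G contains a 3-rung ladder segment L with attachment vertices b_L, w_L, b_R, w_R, then these four attachment vertices are pairwise distinct, w_L is not adjacent to b_R, and w_R is not adjacent to b_L. -/
open Matrix BigOperators

lemma dot3 {ι : Type*} [Fintype ι] [DecidableEq ι] (f : ι → ℤ)
    (hf : ∀ i, f i = 0 ∨ f i = 1) (hsum : ∑ i, f i = 3)
    (x y z : ι) (hxy : x ≠ y) (hxz : x ≠ z) (hyz : y ≠ z)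
    (hx : f x = 1) (hy : f y = 1) (hz : f z = 1) (c : ι → ℤ) :
    ∑ i, f i * c i = c x + c y + c z := by
  classical
  have hxm : x ∉ ({y, z} : Finset ι) := by simp [hxy, hxz]
  have hym : y ∉ ({z} : Finset ι) := by simp [hyz]
  have hS : ∑ i ∈ ({x, y, z} : Finset ι), f i = 3 := by
    rw [Finset.sum_insert hxm, Finset.sum_insert hym, Finset.sum_singleton, hx, hy, hz]; norm_num
  have hsplit := Finset.sum_add_sum_compl ({x, y, z} : Finset ι) f
  have h0 : ∑ i ∈ ({x, y, z} : Finset ι)ᶜ, f i = 0 := by omega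
  have hz0 : ∀ i ∈ ({x, y, z} : Finset ι)ᶜ, f i = 0 := by
    intro i hi
    exact (Finset.sum_eq_zero_iff_of_nonneg
      (fun j _ => by rcases hf j with h | h <;> omega)).mp h0 i hi
  have hsplit2 := Finset.sum_add_sum_compl ({x, y, z} : Finset ι) (fun i => f i * c i)
  have hc0 : ∑ i ∈ ({x, y, z} : Finset ι)ᶜ, f i * c i = 0 :=
    Finset.sum_eq_zero (fun i hi => by rw [hz0 i hi, zero_mul])
  have hcS : ∑ i ∈ ({x, y, z} : Finset ι), f i * c i = c x + c y + c z := by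
    rw [Finset.sum_insert hxm, Finset.sum_insert hym, Finset.sum_singleton, hx, hy, hz]
    ring
  omega

lemma exists3 {ι : Type*} [Fintype ι] [DecidableEq ι] (f : ι → ℤ)
    (hf : ∀ i, f i = 0 ∨ f i = 1) (hsum : ∑ i, f i = 3)
    (x y : ι) (hxy : x ≠ y) (hx : f x = 1) (hy : f y = 1) :
    ∃ z, z ≠ x ∧ z ≠ y ∧ f z = 1 := by
  classical
  by_contra h
  push_neg at h
  have hxm : x ∉ ({y} : Finset ι) := by simp [hxy]
  have hS : ∑ i ∈ ({x, y} : Finset ι), f i = 2 := by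
    rw [Finset.sum_insert hxm, Finset.sum_singleton, hx, hy]; norm_num
  have hc0 : ∑ i ∈ ({x, y} : Finset ι)ᶜ, f i = 0 := by
    apply Finset.sum_eq_zero
    intro i hi
    simp only [Finset.mem_compl, Finset.mem_insert, Finset.mem_singleton, not_or] at hi
    rcases hf i with h' | h'
    · exact h'
    · exact absurd h' (h i hi.1 hi.2)
  have hsplit := Finset.sum_add_sum_compl ({x, y} : Finset ι) f
  omega

lemma endgame {ι : Type*} [Fintype ι] [DecidableEq ι] (g : ι → ℤ)
    (hg : ∀ i, g i = 0 ∨ g i = 1) (x y z : ι)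
    (h : ∀ i, i ≠ x → i ≠ y → i ≠ z → g i = 1) :
    (Fintype.card ι : ℤ) - 3 ≤ ∑ i, g i := by
  classical
  have hsplit := Finset.sum_add_sum_compl ({x, y, z} : Finset ι) g
  have h1 : ∑ i ∈ ({x, y, z} : Finset ι)ᶜ, g i = (({x, y, z} : Finset ι)ᶜ.card : ℤ) := by
    rw [Finset.sum_congr rfl (fun i hi => ?_), Finset.sum_const, nsmul_eq_mul, mul_one]
    simp only [Finset.mem_compl, Finset.mem_insert, Finset.mem_singleton, not_or] at hi
    exact h i hi.1 hi.2.1 hi.2.2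
  have h2 : (0:ℤ) ≤ ∑ i ∈ ({x, y, z} : Finset ι), g i :=
    Finset.sum_nonneg (fun i _ => by rcases hg i with h' | h' <;> omega)
  have h3 : ({x, y, z} : Finset ι).card ≤ 3 := by
    have h4 := Finset.card_insert_le x ({y, z} : Finset ι)
    have h5 := Finset.card_insert_le y ({z} : Finset ι)
    simp only [Finset.card_singleton] at h4 h5
    omega
  have h6 := Finset.card_add_card_compl ({x, y, z} : Finset ι)
  omega

lemma dualLehman {V W : Type*} [Fintype V] [Fintype W] [DecidableEq V] [DecidableEq W]
    (n : ℕ) (hcardV : Fintype.card V = n) (hcardW : Fintype.card W = n)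
    (A B : Matrix V W ℤ)
    (hArow : ∀ b, ∑ w, A b w = 3) (hAcol : ∀ w, ∑ b, A b w = 3)
    (k : ℤ) (hkne : (k:ℚ) ≠ 0) (hnkne : ((n:ℚ) + (k:ℚ)) ≠ 0)
    (hABe : ∀ b b', ∑ w, A b w * B b' w = 1 + k * (if b = b' then 1 else 0)) :
    ∀ w w', ∑ b, B b w * A b w' = 1 + k * (if w = w' then 1 else 0) := by
  classical
  set Aq : Matrix V W ℚ := A.map (fun x => (x:ℚ)) with hAq
  set Bq : Matrix V W ℚ := B.map (fun x => (x:ℚ)) with hBq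
  set Jv : Matrix V V ℚ := Matrix.of (fun _ _ => 1) with hJv
  set Jw : Matrix W W ℚ := Matrix.of (fun _ _ => 1) with hJw
  have hq : Aq * Bqᵀ = Jv + (k:ℚ) • 1 := by
    ext b b'
    have h := hABe b b'
    have hcast : ((∑ w, A b w * B b' w : ℤ) : ℚ) = ∑ w, (A b w : ℚ) * (B b' w : ℚ) := by
      push_cast; rfl
    simp only [hAq, hBq, hJv, Matrix.mul_apply, Matrix.map_apply, Matrix.transpose_apply,
      Matrix.add_apply, Matrix.smul_apply, Matrix.one_apply, Matrix.of_apply, smul_eq_mul,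
      mul_ite, mul_one, mul_zero]
    rw [← hcast, h]
    push_cast
    split <;> ring
  have hJJ : Jv * Jv = (n:ℚ) • Jv := by
    ext i j
    simp only [hJv, Matrix.mul_apply, Matrix.smul_apply, Matrix.of_apply, mul_one, smul_eq_mul]
    rw [Finset.sum_const, Finset.card_univ, hcardV, nsmul_eq_mul, mul_one]
  set Nq : Matrix V V ℚ := (k:ℚ)⁻¹ • ((1 : Matrix V V ℚ) - ((n:ℚ)+(k:ℚ))⁻¹ • Jv) with hNq
  have hMul : (Jv + (k:ℚ) • 1) * Jv = ((n:ℚ)+(k:ℚ)) • Jv := by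
    rw [Matrix.add_mul, hJJ, Matrix.smul_mul, Matrix.one_mul, add_smul]
  have h1 : (Jv + (k:ℚ) • 1) * Nq = 1 := by
    rw [hNq, Matrix.mul_smul, Matrix.mul_sub, Matrix.mul_one, Matrix.mul_smul, hMul, smul_smul,
      inv_mul_cancel₀ hnkne, one_smul, add_sub_cancel_left, smul_smul, inv_mul_cancel₀ hkne,
      one_smul]
  have e : V ≃ W := Fintype.equivOfCardEq (by rw [hcardV, hcardW])
  have hright : Aq * (Bqᵀ * Nq) = 1 := by rw [← Matrix.mul_assoc, hq, h1]
  have hleft : (Bqᵀ * Nq) * Aq = 1 := (Matrix.mul_eq_one_comm_of_equiv e).mp hright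
  have hAcolq : ∀ w, ∑ b, (A b w : ℚ) = 3 := by
    intro w
    have h := hAcol w
    have : ((∑ b, A b w : ℤ) : ℚ) = ∑ b, (A b w : ℚ) := by push_cast; rfl
    rw [← this, h]; norm_num
  have hArowq : ∀ b, ∑ w, (A b w : ℚ) = 3 := by
    intro b
    have h := hArow b
    have : ((∑ w, A b w : ℤ) : ℚ) = ∑ w, (A b w : ℚ) := by push_cast; rfl
    rw [← this, h]; norm_num
  have hX : (Jv + (k:ℚ) • 1) * Aq = Aq * (Jw + (k:ℚ) • 1) := by
    ext i w
    simp only [hJv, hJw, hAq, Matrix.mul_apply, Matrix.add_apply, Matrix.smul_apply,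
      Matrix.one_apply, Matrix.of_apply, Matrix.map_apply, smul_eq_mul]
    have hl : ∀ v, ((1:ℚ) + k * (if i = v then 1 else 0)) * (A v w : ℚ)
        = (A v w : ℚ) + k * (if i = v then (A v w : ℚ) else 0) := by
      intro v; split <;> ring
    have hr : ∀ u, (A i u : ℚ) * ((1:ℚ) + k * (if u = w then 1 else 0))
        = (A i u : ℚ) + k * (if u = w then (A i u : ℚ) else 0) := by
      intro u; split <;> ring
    rw [Finset.sum_congr rfl (fun v _ => hl v), Finset.sum_congr rfl (fun u _ => hr u),
      Finset.sum_add_distrib, Finset.sum_add_distrib, ← Finset.mul_sum, ← Finset.mul_sum,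
      Finset.sum_ite_eq, Finset.sum_ite_eq', if_pos (Finset.mem_univ i),
      if_pos (Finset.mem_univ w), hAcolq w, hArowq i]
  have hfinal : Bqᵀ * Aq = Jw + (k:ℚ) • 1 := by
    have h2 : Aq * (Bqᵀ * Aq) = Aq * (Jw + (k:ℚ) • 1) := by
      rw [← Matrix.mul_assoc, hq, hX]
    calc Bqᵀ * Aq = ((Bqᵀ * Nq) * Aq) * (Bqᵀ * Aq) := by rw [hleft, Matrix.one_mul]
      _ = (Bqᵀ * Nq) * (Aq * (Bqᵀ * Aq)) := by rw [Matrix.mul_assoc]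
      _ = (Bqᵀ * Nq) * (Aq * (Jw + (k:ℚ) • 1)) := by rw [h2]
      _ = ((Bqᵀ * Nq) * Aq) * (Jw + (k:ℚ) • 1) := by rw [← Matrix.mul_assoc]
      _ = Jw + (k:ℚ) • 1 := by rw [hleft, Matrix.one_mul]
  intro w w'
  have h := congrFun (congrFun hfinal w) w'
  simp only [hAq, hBq, hJw, Matrix.mul_apply, Matrix.transpose_apply, Matrix.map_apply,
    Matrix.add_apply, Matrix.smul_apply, Matrix.one_apply, Matrix.of_apply, smul_eq_mul] at h
  have hcast : ((∑ b, B b w * A b w' : ℤ) : ℚ) = ∑ b, (B b w : ℚ) * (A b w' : ℚ) := by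
    push_cast; rfl
  rw [← hcast] at h
  by_cases hww : w = w'
  · rw [if_pos hww] at h
    rw [if_pos hww]
    exact_mod_cast h
  · rw [if_neg hww] at h
    rw [if_neg hww]
    rw [mul_zero, add_zero] at h ⊢
    exact_mod_cast h

/-- In a Lehman graph of type (n,3,s) with k = 3s - n ∈ {1,-1} (s > 2 if k = 1, s > 1 if
k = -1), the attachment vertices of any 3-rung ladder segment are pairwise distinct and
the pairs (b_L, w_R), (b_R, w_L) are non-adjacent. -/
theorem stmt12 {V W : Type*} [Fintype V] [Fintype W] [DecidableEq V] [DecidableEq W]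
    (n s : ℕ) (hcardV : Fintype.card V = n) (hcardW : Fintype.card W = n)
    (A : Matrix V W ℤ) (hA : is01 A)
    (hArow : ∀ b, ∑ w, A b w = 3) (hAcol : ∀ w, ∑ b, A b w = 3)
    (B : Matrix V W ℤ) (hB : is01 B)
    (hBrow : ∀ b, ∑ w, B b w = s) (hBcol : ∀ w, ∑ b, B b w = s)
    (k : ℤ) (hk : k = 3 * s - n) (hk1 : k = 1 ∨ k = -1)
    (hs1 : k = 1 → 2 < s) (hs2 : k = -1 → 1 < s)
    (hAB : A * Bᵀ = Matrix.of (fun _ _ => (1 : ℤ)) + k • 1)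
    -- the 3-rung ladder segment L
    (b₀ b₁ b₂ : V) (w₀ w₁ w₂ : W)
    (hb01 : b₀ ≠ b₁) (hb02 : b₀ ≠ b₂) (hb12 : b₁ ≠ b₂)
    (hw01 : w₀ ≠ w₁) (hw02 : w₀ ≠ w₂) (hw12 : w₁ ≠ w₂)
    (h00 : A b₀ w₀ = 1) (h11 : A b₁ w₁ = 1) (h22 : A b₂ w₂ = 1)
    (h01 : A b₀ w₁ = 1) (h10 : A b₁ w₀ = 1) (h12 : A b₁ w₂ = 1) (h21 : A b₂ w₁ = 1)
    (h02 : A b₀ w₂ = 0) (h20 : A b₂ w₀ = 0)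
    -- the attachment vertices
    (bL : V) (hbL : bL ∉ ({b₀, b₁, b₂} : Set V)) (hbLe : A bL w₀ = 1)
    (wL : W) (hwL : wL ∉ ({w₀, w₁, w₂} : Set W)) (hwLe : A b₀ wL = 1)
    (bR : V) (hbR : bR ∉ ({b₀, b₁, b₂} : Set V)) (hbRe : A bR w₂ = 1)
    (wR : W) (hwR : wR ∉ ({w₀, w₁, w₂} : Set W)) (hwRe : A b₂ wR = 1) :
    bL ≠ bR ∧ wL ≠ wR ∧ A bR wL = 0 ∧ A bL wR = 0 := by
  classical
  simp only [Set.mem_insert_iff, Set.mem_singleton_iff, not_or] at hbL hwL hbR hwR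
  obtain ⟨hbL0, hbL1, hbL2⟩ := hbL
  obtain ⟨hwL0, hwL1, hwL2⟩ := hwL
  obtain ⟨hbR0, hbR1, hbR2⟩ := hbR
  obtain ⟨hwR0, hwR1, hwR2⟩ := hwR
  -- entrywise form of A * Bᵀ = J + k I
  have hABe : ∀ b b', ∑ w, A b w * B b' w = 1 + k * (if b = b' then 1 else 0) := by
    intro b b'
    have h := congrFun (congrFun hAB b) b'
    rw [Matrix.add_apply, Matrix.smul_apply] at h
    simpa [Matrix.mul_apply, Matrix.transpose_apply, Matrix.one_apply, Matrix.add_apply,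
      Matrix.smul_apply, Matrix.of_apply, smul_eq_mul, mul_ite, mul_one, mul_zero] using h
  -- s ≥ 2
  have hsge2 : 2 ≤ s := by
    rcases hk1 with h | h
    · have := hs1 h; omega
    · have := hs2 h; omega
  have hkne : (k:ℚ) ≠ 0 := by
    rcases hk1 with h | h <;> rw [h] <;> norm_num
  have hnkZ : (n:ℤ) + k = 3 * s := by omega
  have hnkne : ((n:ℚ) + (k:ℚ)) ≠ 0 := by
    have h2 : ((n:ℚ) + (k:ℚ)) = 3 * (s:ℚ) := by exact_mod_cast hnkZ
    rw [h2]
    have : (2:ℚ) ≤ (s:ℚ) := by exact_mod_cast hsge2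
    positivity
  -- entrywise form of Bᵀ * A = J + k I
  have hBAe := dualLehman n hcardV hcardW A B hArow hAcol k hkne hnkne hABe
  -- row dot products
  have rd0 : ∀ c : W → ℤ, ∑ w, A b₀ w * c w = c w₀ + c w₁ + c wL :=
    fun c => dot3 (A b₀) (hA b₀) (hArow b₀) w₀ w₁ wL hw01 (Ne.symm hwL0) (Ne.symm hwL1)
      h00 h01 hwLe c
  have rd1 : ∀ c : W → ℤ, ∑ w, A b₁ w * c w = c w₀ + c w₁ + c w₂ :=
    fun c => dot3 (A b₁) (hA b₁) (hArow b₁) w₀ w₁ w₂ hw01 hw02 hw12 h10 h11 h12 c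
  have rd2 : ∀ c : W → ℤ, ∑ w, A b₂ w * c w = c w₁ + c w₂ + c wR :=
    fun c => dot3 (A b₂) (hA b₂) (hArow b₂) w₁ w₂ wR hw12 (Ne.symm hwR1) (Ne.symm hwR2)
      h21 h22 hwRe c
  -- column dot products
  have cd0 : ∀ c : V → ℤ, ∑ b, A b w₀ * c b = c b₀ + c b₁ + c bL :=
    fun c => dot3 (fun b => A b w₀) (fun b => hA b w₀) (hAcol w₀) b₀ b₁ bL hb01
      (Ne.symm hbL0) (Ne.symm hbL1) h00 h10 hbLe c
  have cd1 : ∀ c : V → ℤ, ∑ b, A b w₁ * c b = c b₀ + c b₁ + c b₂ :=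
    fun c => dot3 (fun b => A b w₁) (fun b => hA b w₁) (hAcol w₁) b₀ b₁ b₂ hb01 hb02 hb12
      h01 h11 h21 c
  have cd2 : ∀ c : V → ℤ, ∑ b, A b w₂ * c b = c b₁ + c b₂ + c bR :=
    fun c => dot3 (fun b => A b w₂) (fun b => hA b w₂) (hAcol w₂) b₁ b₂ bR hb12
      (Ne.symm hbR1) (Ne.symm hbR2) h12 h22 hbRe c
  -- helper to extract row equations: for b' ≠ the row base
  have rowEq : ∀ (b : V) (x y z : W),
      (∀ c : W → ℤ, ∑ w, A b w * c w = c x + c y + c z) →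
      ∀ b' : V, b ≠ b' → B b' x + B b' y + B b' z = 1 := by
    intro b x y z hd b' hne
    have h := hABe b b'
    rw [if_neg hne, mul_zero, add_zero] at h
    have h2 := hd (fun w => B b' w)
    linarith [h, h2]
  have colEq : ∀ (w : W) (x y z : V),
      (∀ c : V → ℤ, ∑ b, A b w * c b = c x + c y + c z) →
      ∀ w' : W, w' ≠ w → B x w' + B y w' + B z w' = 1 := by
    intro w x y z hd w' hne
    have h := hBAe w' w
    rw [if_neg hne, mul_zero, add_zero] at h
    have h2 : ∑ b, B b w' * A b w = ∑ b, A b w * B b w' :=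
      Finset.sum_congr rfl (fun b _ => mul_comm _ _)
    have h3 := hd (fun b => B b w')
    linarith [h, h2, h3]
  have goal1 : bL ≠ bR := by
    intro hEq
    have key : ∀ w : W, w ≠ w₀ → w ≠ w₁ → w ≠ w₂ → B b₁ w = 1 := by
      intro w hw0 hw1 hw2
      have e0 := colEq w₀ b₀ b₁ bL cd0 w hw0
      have e1 := colEq w₁ b₀ b₁ b₂ cd1 w hw1
      have e2 := colEq w₂ b₁ b₂ bR cd2 w hw2
      rw [← hEq] at e2
      have q1 := hB b₁ w
      have q2 := hB bL w
      have q3 := hB b₀ w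
      have q4 := hB b₂ w
      omega
    have hbound : (Fintype.card W : ℤ) - 3 ≤ ∑ w, B b₁ w :=
      endgame (B b₁) (hB b₁) w₀ w₁ w₂ key
    rw [hcardW, hBrow b₁] at hbound
    rcases hk1 with h | h
    · have := hs1 h; omega
    · have := hs2 h; omega
  have goal2 : wL ≠ wR := by
    intro hEq
    have key : ∀ b : V, b ≠ b₀ → b ≠ b₁ → b ≠ b₂ → B b w₁ = 1 := by
      intro b hb0 hb1 hb2
      have e0 := rowEq b₀ w₀ w₁ wL rd0 b (Ne.symm hb0)
      have e1 := rowEq b₁ w₀ w₁ w₂ rd1 b (Ne.symm hb1)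
      have e2 := rowEq b₂ w₁ w₂ wR rd2 b (Ne.symm hb2)
      rw [← hEq] at e2
      have q1 := hB b w₁
      have q2 := hB b wL
      have q3 := hB b w₀
      have q4 := hB b w₂
      omega
    have hbound : (Fintype.card V : ℤ) - 3 ≤ ∑ b, B b w₁ :=
      endgame (fun b => B b w₁) (fun b => hB b w₁) b₀ b₁ b₂ key
    rw [hcardV, hBcol w₁] at hbound
    rcases hk1 with h | h
    · have := hs1 h; omega
    · have := hs2 h; omega
  have goal3 : A bR wL = 0 := by
    by_contra hcon
    have hc : A bR wL = 1 := (hA bR wL).resolve_left hcon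
    obtain ⟨u, hu2, huL, huE⟩ := exists3 (A bR) (hA bR) (hArow bR) w₂ wL
      (Ne.symm hwL2) hbRe hc
    have rdR : ∀ c : W → ℤ, ∑ w, A bR w * c w = c w₂ + c wL + c u :=
      fun c => dot3 (A bR) (hA bR) (hArow bR) w₂ wL u (Ne.symm hwL2) (Ne.symm hu2)
        (Ne.symm huL) hbRe hc huE c
    have key : ∀ b : V, b ≠ b₀ → b ≠ b₁ → b ≠ bR → B b u = 1 := by
      intro b hb0 hb1 hbRR
      have e0 := rowEq b₀ w₀ w₁ wL rd0 b (Ne.symm hb0)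
      have e1 := rowEq b₁ w₀ w₁ w₂ rd1 b (Ne.symm hb1)
      have eR := rowEq bR w₂ wL u rdR b (Ne.symm hbRR)
      have q1 := hB b wL
      have q2 := hB b u
      have q3 := hB b w₀
      have q4 := hB b w₁
      have q5 := hB b w₂
      omega
    have hbound : (Fintype.card V : ℤ) - 3 ≤ ∑ b, B b u :=
      endgame (fun b => B b u) (fun b => hB b u) b₀ b₁ bR key
    rw [hcardV, hBcol u] at hbound
    rcases hk1 with h | h
    · have := hs1 h; omega
    · have := hs2 h; omega
  have goal4 : A bL wR = 0 := by
    by_contra hcon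
    have hc : A bL wR = 1 := (hA bL wR).resolve_left hcon
    obtain ⟨y, hy0, hyR, hyE⟩ := exists3 (A bL) (hA bL) (hArow bL) w₀ wR
      (Ne.symm hwR0) hbLe hc
    have rdL : ∀ c : W → ℤ, ∑ w, A bL w * c w = c w₀ + c wR + c y :=
      fun c => dot3 (A bL) (hA bL) (hArow bL) w₀ wR y (Ne.symm hwR0) (Ne.symm hy0)
        (Ne.symm hyR) hbLe hc hyE c
    have key : ∀ b : V, b ≠ b₁ → b ≠ b₂ → b ≠ bL → B b y = 1 := by
      intro b hb1 hb2 hbLL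
      have e1 := rowEq b₁ w₀ w₁ w₂ rd1 b (Ne.symm hb1)
      have e2 := rowEq b₂ w₁ w₂ wR rd2 b (Ne.symm hb2)
      have eL := rowEq bL w₀ wR y rdL b (Ne.symm hbLL)
      have q1 := hB b wR
      have q2 := hB b y
      have q3 := hB b w₀
      have q4 := hB b w₁
      have q5 := hB b w₂
      omega
    have hbound : (Fintype.card V : ℤ) - 3 ≤ ∑ b, B b y :=
      endgame (fun b => B b y) (fun b => hB b y) b₁ b₂ bL key
    rw [hcardV, hBcol y] at hbound
    rcases hk1 with h | h
    · have := hs1 h; omega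
    · have := hs2 h; omega
  exact ⟨goal1, goal2, goal3, goal4⟩
end
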